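/- arXiv:2510.10088 — 4 statements merged into one kernel-verified Lean document; each statement's English description precedes it below -/
import Mathlib

section
/- Let r ≥ 2 be an integer, let x > 0, and let t be real with t > 1−r. Then Σ_{ℓ=1}^{r−1} binom(r,ℓ) x^ℓ Θ(ℓ, r−ℓ, t+r, x) = (1 + (−1)^r) x^{r−1} Θ(r−1, 1, t+r, x) + Σ_{ℓ=1}^{r−2} ( (−1)^{ℓ+1} + binom(r−1,ℓ) ) x^ℓ Θ(ℓ+1, r−ℓ, t+r−1, x). -/
open Real Filter Topology Finset

noncomputable def Theta (r s t x : ℝ) : ℝ :=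
  ∑' n : ℕ+, ∑' m : ℕ+, 1 / ((n : ℝ) ^ r * (m : ℝ) ^ s * ((n : ℝ) + (m : ℝ) * x) ^ t)

noncomputable def Ff (x a b c : ℝ) (p : ℕ+ × ℕ+) : ℝ :=
  1 / ((p.1 : ℝ) ^ a * (p.2 : ℝ) ^ b * ((p.1 : ℝ) + (p.2 : ℝ) * x) ^ c)

lemma myIcc (f : ℕ → ℝ) (n : ℕ) : ∑ ℓ ∈ Icc 1 n, f ℓ = ∑ i ∈ range n, f (i+1) := by
  induction n with
  | zero => simp
  | succ k ih => rw [Finset.sum_Icc_succ_top (by omega), ih, Finset.sum_range_succ]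

lemma myS1 (n : ℕ) (A B : ℝ) :
    ∑ ℓ ∈ Icc 1 n, ((n+1).choose ℓ : ℝ) * B^ℓ * A^(n+1-ℓ)
      = (B+A)^(n+1) - A^(n+1) - B^(n+1) := by
  have h := add_pow B A (n+1)
  rw [Finset.sum_range_succ, Finset.sum_range_succ'] at h
  simp only [Nat.choose_self, Nat.cast_one, Nat.sub_self, pow_zero, mul_one,
    Nat.choose_zero_right, Nat.sub_zero, one_mul] at h
  rw [myIcc]
  have e : ∀ i ∈ range n, ((n+1).choose (i+1) : ℝ) * B^(i+1) * A^(n+1-(i+1))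
      = B^(i+1) * A^(n+1-(i+1)) * ((n+1).choose (i+1)) := fun i _ => by ring
  rw [Finset.sum_congr rfl e]
  linarith [h]

lemma myT (k : ℕ) (A B : ℝ) :
    ∑ ℓ ∈ Icc 1 k, (-1:ℝ)^(ℓ+1) * B^ℓ * A^(k+1-ℓ) * (A+B)
      = B * A^(k+1) - (-1:ℝ)^k * B^(k+1) * A := by
  rw [myIcc]
  have e : ∀ i ∈ range k, (-1:ℝ)^(i+1+1) * B^(i+1) * A^(k+1-(i+1)) * (A+B)
      = (fun i => (-1:ℝ)^(i+2) * B^(i+1) * A^(k+1-i)) i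
        - (fun i => (-1:ℝ)^(i+2) * B^(i+1) * A^(k+1-i)) (i+1) := by
    intro i hi
    simp only [Finset.mem_range] at hi
    have e1 : k+1-(i+1) = k-i := by omega
    have e2 : k+1-i = (k-i)+1 := by omega
    simp only [e1, e2]
    ring
  rw [Finset.sum_congr rfl e, Finset.sum_range_sub']
  have e3 : k+1-k = 1 := by omega
  simp only [e3, Nat.sub_zero, pow_one]
  ring

lemma myStar (r : ℕ) (hr : 2 ≤ r) (A B : ℝ) :
    ∑ ℓ ∈ Icc 1 (r-1), (r.choose ℓ : ℝ) * B^ℓ * A^(r-ℓ)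
      = (1 + (-1:ℝ)^r) * A * B^(r-1)
        + ∑ ℓ ∈ Icc 1 (r-2), ((-1:ℝ)^(ℓ+1) + ((r-1).choose ℓ : ℝ)) * B^ℓ * A^(r-1-ℓ) * (A+B) := by
  obtain ⟨k, rfl⟩ : ∃ k, r = k + 2 := ⟨r - 2, by omega⟩
  have e1 : k + 2 - 1 = k + 1 := by omega
  have e2 : k + 2 - 2 = k := by omega
  rw [e1, e2]
  have split : ∑ ℓ ∈ Icc 1 k, ((-1:ℝ)^(ℓ+1) + ((k+1).choose ℓ:ℝ)) * B^ℓ * A^(k+1-ℓ) * (A+B)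
      = (∑ ℓ ∈ Icc 1 k, (-1:ℝ)^(ℓ+1) * B^ℓ * A^(k+1-ℓ) * (A+B))
        + ∑ ℓ ∈ Icc 1 k, (((k+1).choose ℓ:ℝ) * B^ℓ * A^(k+1-ℓ)) * (A+B) := by
    rw [← Finset.sum_add_distrib]; exact Finset.sum_congr rfl fun ℓ _ => by ring
  have hS2 := myS1 k A B
  have hS1 := myS1 (k+1) A B
  have hmatch : ∑ ℓ ∈ Icc 1 (k+1), ((k+1+1).choose ℓ : ℝ) * B^ℓ * A^(k+1+1-ℓ)
      = ∑ ℓ ∈ Icc 1 (k+1), ((k+2).choose ℓ : ℝ) * B^ℓ * A^(k+2-ℓ) := by norm_num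
  rw [hmatch] at hS1
  rw [split, myT, ← Finset.sum_mul, hS2, hS1]
  ring

lemma summable_pnat (p : ℝ) (hp : 1 < p) : Summable (fun n : ℕ+ => 1/((n:ℝ))^p) := by
  have h : Summable (fun n : ℕ => 1/(n:ℝ)^p) := Real.summable_one_div_nat_rpow.2 hp
  exact h.comp_injective PNat.coe_injective

lemma summable_Ff (x : ℝ) (hx : 0 < x) (a b c : ℝ) (ha : 1 ≤ a) (hb : 1 ≤ b) (hc : 0 < c) :
    Summable (Ff x a b c) := by
  have hg1 : Summable (fun n : ℕ+ => 1/((n:ℝ))^(a + c/2)) :=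
    summable_pnat _ (by linarith)
  have hg2 : Summable (fun m : ℕ+ => (x^(c/2))⁻¹ * (1/((m:ℝ))^(b + c/2))) :=
    (summable_pnat _ (by linarith)).mul_left _
  have hprod : Summable (fun q : ℕ+ × ℕ+ =>
      (1/((q.1:ℝ))^(a + c/2)) * ((x^(c/2))⁻¹ * (1/((q.2:ℝ))^(b + c/2)))) :=
    hg1.mul_of_nonneg hg2 (fun n => by positivity) (fun m => by positivity)
  refine hprod.of_nonneg_of_le (fun q => by unfold Ff; positivity) (fun q => ?_)
  obtain ⟨n, m⟩ := q
  have hn : (0:ℝ) < n := by exact_mod_cast n.pos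
  have hm : (0:ℝ) < m := by exact_mod_cast m.pos
  have hn1 : (1:ℝ) ≤ n := by exact_mod_cast n.one_le
  have hP : (0:ℝ) < (n:ℝ) + (m:ℝ) * x := by positivity
  have hsplit : ((n:ℝ)+(m:ℝ)*x)^c = ((n:ℝ)+(m:ℝ)*x)^(c/2) * ((n:ℝ)+(m:ℝ)*x)^(c/2) := by
    rw [← Real.rpow_add hP]; norm_num
  have h1 : (n:ℝ)^(c/2) * ((m:ℝ)^(c/2) * x^(c/2)) ≤ ((n:ℝ)+(m:ℝ)*x)^c := by
    rw [hsplit, ← Real.mul_rpow hm.le hx.le]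
    exact mul_le_mul
      (Real.rpow_le_rpow hn.le (le_add_of_nonneg_right (mul_pos hm hx).le) (by positivity))
      (Real.rpow_le_rpow (by positivity) (le_add_of_nonneg_left hn.le) (by positivity))
      (by positivity) (by positivity)
  have h2 : (n:ℝ)^(a+c/2) * (m:ℝ)^(b+c/2) * x^(c/2)
      ≤ (n:ℝ)^a * (m:ℝ)^b * ((n:ℝ) + (m:ℝ)*x)^c := by
    rw [Real.rpow_add hn, Real.rpow_add hm]
    calc (n:ℝ)^a * (n:ℝ)^(c/2) * ((m:ℝ)^b * (m:ℝ)^(c/2)) * x^(c/2)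
        = ((n:ℝ)^a * (m:ℝ)^b) * ((n:ℝ)^(c/2) * ((m:ℝ)^(c/2) * x^(c/2))) := by ring
      _ ≤ ((n:ℝ)^a * (m:ℝ)^b) * (((n:ℝ) + (m:ℝ)*x)^c) :=
          mul_le_mul_of_nonneg_left h1 (by positivity)
  have hDpos : (0:ℝ) < (n:ℝ)^(a+c/2) * (m:ℝ)^(b+c/2) * x^(c/2) := by positivity
  show Ff x a b c (n, m) ≤ _
  unfold Ff
  calc 1 / (((n,m).1:ℝ)^a * ((n,m).2:ℝ)^b * (((n,m).1:ℝ) + ((n,m).2:ℝ)*x)^c)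
      = 1 / ((n:ℝ)^a * (m:ℝ)^b * ((n:ℝ) + (m:ℝ)*x)^c) := rfl
    _ ≤ 1 / ((n:ℝ)^(a+c/2) * (m:ℝ)^(b+c/2) * x^(c/2)) :=
        one_div_le_one_div_of_le hDpos h2
    _ = (1/((n:ℝ))^(a + c/2)) * ((x^(c/2))⁻¹ * (1/((m:ℝ))^(b + c/2))) := by
        rw [one_div, one_div, one_div, mul_inv, mul_inv]; ring

lemma theta_eq (x : ℝ) (hx : 0 < x) (a b c : ℝ) (ha : 1 ≤ a) (hb : 1 ≤ b) (hc : 0 < c) :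
    Theta a b c x = ∑' p : ℕ+ × ℕ+, Ff x a b c p := by
  have hs := summable_Ff x hx a b c ha hb hc
  rw [Theta]
  exact (Summable.tsum_prod' hs hs.prod_factor).symm

lemma helper1 (N M Q : ℝ) (hN : 0 < N) (hM : 0 < M) (hQ : 0 < Q) (i j r : ℕ)
    (hij : i + j = r) :
    1 / (N^i * M^j * Q) = (M^i * N^j) / (N^r * M^r * Q) := by
  have hN2 : N^r = N^i * N^j := by rw [← pow_add, hij]
  have hM2 : M^r = M^j * M^i := by rw [← pow_add]; congr 1; omega
  rw [div_eq_div_iff (by positivity) (by positivity), hN2, hM2]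
  ring

lemma helper2 (N M Q P : ℝ) (hN : 0 < N) (hM : 0 < M) (hQ : 0 < Q) (hP : 0 < P)
    (i j i' j' r : ℕ) (h1 : i + j' = r) (h2 : j + i' = r) :
    1 / (N^i * M^j * Q) = (M^i' * N^j' * P) / (N^r * M^r * (Q*P)) := by
  have hN2 : N^r = N^i * N^j' := by rw [← pow_add, h1]
  have hM2 : M^r = M^j * M^i' := by rw [← pow_add, h2]
  rw [div_eq_div_iff (by positivity) (by positivity), hN2, hM2]
  ring

lemma pointwise (r : ℕ) (hr : 2 ≤ r) (x : ℝ) (hx : 0 < x) (t : ℝ) (ht : 1 - (r:ℝ) < t)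
    (p : ℕ+ × ℕ+) :
    ∑ ℓ ∈ Icc 1 (r-1), (r.choose ℓ : ℝ) * x^ℓ * Ff x ℓ ((r:ℝ)-ℓ) (t+r) p
      = (1 + (-1:ℝ)^r) * x^(r-1) * Ff x ((r:ℝ)-1) 1 (t+r) p
        + ∑ ℓ ∈ Icc 1 (r-2), ((-1:ℝ)^(ℓ+1) + ((r-1).choose ℓ : ℝ)) * x^ℓ *
            Ff x ((ℓ:ℝ)+1) ((r:ℝ)-ℓ) (t+r-1) p := by
  obtain ⟨n, m⟩ := p
  have hN : (0:ℝ) < n := by exact_mod_cast n.pos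
  have hM : (0:ℝ) < m := by exact_mod_cast m.pos
  have hP : (0:ℝ) < (n:ℝ) + (m:ℝ)*x := by positivity
  have hQ : (0:ℝ) < ((n:ℝ) + (m:ℝ)*x)^(t+r) := by positivity
  have hQ' : (0:ℝ) < ((n:ℝ) + (m:ℝ)*x)^(t+r-1) := by positivity
  have hQsplit : ((n:ℝ) + (m:ℝ)*x)^(t+r)
      = ((n:ℝ) + (m:ℝ)*x)^(t+r-1) * ((n:ℝ) + (m:ℝ)*x) := by
    have h := Real.rpow_add_one hP.ne' (t+(r:ℝ)-1)
    rw [sub_add_cancel] at h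
    exact h
  have claimL : ∀ ℓ ∈ Icc 1 (r-1),
      Ff x ℓ ((r:ℝ)-ℓ) (t+r) (n, m)
        = ((m:ℝ)^ℓ * (n:ℝ)^(r-ℓ)) / ((n:ℝ)^r * (m:ℝ)^r * ((n:ℝ) + (m:ℝ)*x)^(t+r)) := by
    intro ℓ hℓ
    simp only [mem_Icc] at hℓ
    have hle : ℓ ≤ r := by omega
    have hc1 : ((r:ℝ) - (ℓ:ℝ)) = ((r-ℓ : ℕ):ℝ) := by
      rw [Nat.cast_sub hle]
    unfold Ff
    simp only []
    rw [hc1, Real.rpow_natCast, Real.rpow_natCast]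
    exact helper1 _ _ _ hN hM hQ ℓ (r-ℓ) r (by omega)
  have claimR1 : Ff x ((r:ℝ)-1) 1 (t+r) (n, m)
      = ((m:ℝ)^(r-1) * (n:ℝ)) / ((n:ℝ)^r * (m:ℝ)^r * ((n:ℝ) + (m:ℝ)*x)^(t+r)) := by
    have hc1 : ((r:ℝ) - 1) = ((r-1 : ℕ):ℝ) := by
      rw [Nat.cast_sub (by omega)]; norm_num
    unfold Ff
    simp only []
    rw [hc1, Real.rpow_natCast, Real.rpow_one]
    have hN2 : (n:ℝ)^r = (n:ℝ)^(r-1) * (n:ℝ) := by rw [← pow_succ]; congr 1; omega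
    have hM2 : (m:ℝ)^r = (m:ℝ) * (m:ℝ)^(r-1) := by rw [← pow_succ']; congr 1; omega
    rw [div_eq_div_iff (by positivity) (by positivity), hN2, hM2]
    ring
  have claimR2 : ∀ ℓ ∈ Icc 1 (r-2),
      Ff x ((ℓ:ℝ)+1) ((r:ℝ)-ℓ) (t+r-1) (n, m)
        = ((m:ℝ)^ℓ * (n:ℝ)^(r-1-ℓ) * ((n:ℝ) + (m:ℝ)*x))
            / ((n:ℝ)^r * (m:ℝ)^r * ((n:ℝ) + (m:ℝ)*x)^(t+r)) := by
    intro ℓ hℓ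
    simp only [mem_Icc] at hℓ
    have hle : ℓ ≤ r := by omega
    have hc1 : ((r:ℝ) - (ℓ:ℝ)) = ((r-ℓ : ℕ):ℝ) := by rw [Nat.cast_sub hle]
    have hc2 : ((ℓ:ℝ) + 1) = ((ℓ+1 : ℕ):ℝ) := by push_cast; ring
    unfold Ff
    simp only []
    rw [hc1, hc2, Real.rpow_natCast, Real.rpow_natCast, hQsplit]
    exact helper2 _ _ _ _ hN hM hQ' hP (ℓ+1) (r-ℓ) ℓ (r-1-ℓ) r (by omega) (by omega)
  have main := myStar r hr (n:ℝ) ((m:ℝ)*x)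
  calc ∑ ℓ ∈ Icc 1 (r-1), (r.choose ℓ : ℝ) * x^ℓ * Ff x ℓ ((r:ℝ)-ℓ) (t+r) (n, m)
      = ∑ ℓ ∈ Icc 1 (r-1), ((r.choose ℓ : ℝ) * ((m:ℝ)*x)^ℓ * (n:ℝ)^(r-ℓ))
          / ((n:ℝ)^r * (m:ℝ)^r * ((n:ℝ) + (m:ℝ)*x)^(t+r)) := by
        refine Finset.sum_congr rfl fun ℓ hℓ => ?_
        rw [claimL ℓ hℓ, mul_pow]
        ring
    _ = (∑ ℓ ∈ Icc 1 (r-1), (r.choose ℓ : ℝ) * ((m:ℝ)*x)^ℓ * (n:ℝ)^(r-ℓ))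
          / ((n:ℝ)^r * (m:ℝ)^r * ((n:ℝ) + (m:ℝ)*x)^(t+r)) := by
        rw [Finset.sum_div]
    _ = ((1 + (-1:ℝ)^r) * (n:ℝ) * ((m:ℝ)*x)^(r-1)
          + ∑ ℓ ∈ Icc 1 (r-2), ((-1:ℝ)^(ℓ+1) + ((r-1).choose ℓ : ℝ)) * ((m:ℝ)*x)^ℓ
              * (n:ℝ)^(r-1-ℓ) * ((n:ℝ) + (m:ℝ)*x))
          / ((n:ℝ)^r * (m:ℝ)^r * ((n:ℝ) + (m:ℝ)*x)^(t+r)) := by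
        rw [main]
    _ = (1 + (-1:ℝ)^r) * x^(r-1) * Ff x ((r:ℝ)-1) 1 (t+r) (n, m)
        + ∑ ℓ ∈ Icc 1 (r-2), ((-1:ℝ)^(ℓ+1) + ((r-1).choose ℓ : ℝ)) * x^ℓ *
            Ff x ((ℓ:ℝ)+1) ((r:ℝ)-ℓ) (t+r-1) (n, m) := by
        rw [add_div, Finset.sum_div, claimR1]
        congr 1
        · rw [mul_pow]; ring
        · refine Finset.sum_congr rfl fun ℓ hℓ => ?_
          rw [claimR2 ℓ hℓ, mul_pow]
          ring

theorem stmt15 (r : ℕ) (hr : 2 ≤ r) (x : ℝ) (hx : 0 < x) (t : ℝ) (ht : 1 - (r : ℝ) < t) :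
    (∑ ℓ ∈ Finset.Icc 1 (r - 1),
        (r.choose ℓ : ℝ) * x ^ ℓ * Theta ℓ ((r : ℝ) - ℓ) (t + r) x)
      = (1 + (-1 : ℝ) ^ r) * x ^ (r - 1) * Theta ((r : ℝ) - 1) 1 (t + r) x
        + ∑ ℓ ∈ Finset.Icc 1 (r - 2),
            ((-1 : ℝ) ^ (ℓ + 1) + ((r - 1).choose ℓ : ℝ)) * x ^ ℓ *
              Theta ((ℓ : ℝ) + 1) ((r : ℝ) - ℓ) (t + r - 1) x := by
  have hr2 : (2:ℝ) ≤ (r:ℝ) := by exact_mod_cast hr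
  have hc : (0:ℝ) < t + r := by linarith
  have hc' : (0:ℝ) < t + r - 1 := by linarith
  have hLa : ∀ ℓ ∈ Icc 1 (r-1), (1:ℝ) ≤ (ℓ:ℝ) ∧ (1:ℝ) ≤ (r:ℝ) - ℓ := by
    intro ℓ hℓ
    simp only [mem_Icc] at hℓ
    constructor
    · exact_mod_cast hℓ.1
    · have : (ℓ:ℝ) + 1 ≤ (r:ℝ) := by exact_mod_cast (by omega : ℓ + 1 ≤ r)
      linarith
  have hsumL : ∀ ℓ ∈ Icc 1 (r-1), Summable (Ff x ℓ ((r:ℝ)-ℓ) (t+r)) := fun ℓ hℓ =>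
    summable_Ff x hx _ _ _ (hLa ℓ hℓ).1 (hLa ℓ hℓ).2 hc
  have hsumR1 : Summable (Ff x ((r:ℝ)-1) 1 (t+r)) :=
    summable_Ff x hx _ _ _ (by linarith) le_rfl hc
  have hR2a : ∀ ℓ ∈ Icc 1 (r-2), (1:ℝ) ≤ (ℓ:ℝ)+1 ∧ (1:ℝ) ≤ (r:ℝ) - ℓ := by
    intro ℓ hℓ
    simp only [mem_Icc] at hℓ
    constructor
    · have : (0:ℝ) ≤ (ℓ:ℝ) := Nat.cast_nonneg _
      linarith
    · have : (ℓ:ℝ) + 1 ≤ (r:ℝ) := by exact_mod_cast (by omega : ℓ + 1 ≤ r)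
      linarith
  have hsumR2 : ∀ ℓ ∈ Icc 1 (r-2), Summable (Ff x ((ℓ:ℝ)+1) ((r:ℝ)-ℓ) (t+r-1)) := fun ℓ hℓ =>
    summable_Ff x hx _ _ _ (hR2a ℓ hℓ).1 (hR2a ℓ hℓ).2 hc'
  calc (∑ ℓ ∈ Icc 1 (r - 1), (r.choose ℓ : ℝ) * x ^ ℓ * Theta ℓ ((r : ℝ) - ℓ) (t + r) x)
      = ∑ ℓ ∈ Icc 1 (r-1), ∑' p : ℕ+ × ℕ+,
          (r.choose ℓ : ℝ) * x^ℓ * Ff x ℓ ((r:ℝ)-ℓ) (t+r) p := by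
        refine Finset.sum_congr rfl fun ℓ hℓ => ?_
        rw [theta_eq x hx _ _ _ (hLa ℓ hℓ).1 (hLa ℓ hℓ).2 hc, tsum_mul_left]
    _ = ∑' p : ℕ+ × ℕ+, ∑ ℓ ∈ Icc 1 (r-1),
          (r.choose ℓ : ℝ) * x^ℓ * Ff x ℓ ((r:ℝ)-ℓ) (t+r) p :=
        (Summable.tsum_finsetSum fun ℓ hℓ => (hsumL ℓ hℓ).mul_left _).symm
    _ = ∑' p : ℕ+ × ℕ+,
          ((1 + (-1:ℝ)^r) * x^(r-1) * Ff x ((r:ℝ)-1) 1 (t+r) p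
            + ∑ ℓ ∈ Icc 1 (r-2), ((-1:ℝ)^(ℓ+1) + ((r-1).choose ℓ : ℝ)) * x^ℓ *
                Ff x ((ℓ:ℝ)+1) ((r:ℝ)-ℓ) (t+r-1) p) :=
        tsum_congr fun p => pointwise r hr x hx t ht p
    _ = (∑' p : ℕ+ × ℕ+, (1 + (-1:ℝ)^r) * x^(r-1) * Ff x ((r:ℝ)-1) 1 (t+r) p)
        + ∑' p : ℕ+ × ℕ+, ∑ ℓ ∈ Icc 1 (r-2),
            ((-1:ℝ)^(ℓ+1) + ((r-1).choose ℓ : ℝ)) * x^ℓ *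
              Ff x ((ℓ:ℝ)+1) ((r:ℝ)-ℓ) (t+r-1) p :=
        Summable.tsum_add (hsumR1.mul_left _)
          (summable_sum fun ℓ hℓ => (hsumR2 ℓ hℓ).mul_left _)
    _ = (1 + (-1 : ℝ) ^ r) * x ^ (r - 1) * Theta ((r : ℝ) - 1) 1 (t + r) x
        + ∑ ℓ ∈ Icc 1 (r - 2),
            ((-1 : ℝ) ^ (ℓ + 1) + ((r - 1).choose ℓ : ℝ)) * x ^ ℓ *
              Theta ((ℓ : ℝ) + 1) ((r : ℝ) - ℓ) (t + r - 1) x := by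
        congr 1
        · rw [tsum_mul_left, ← theta_eq x hx _ _ _ (by linarith) le_rfl hc]
        · rw [Summable.tsum_finsetSum fun ℓ hℓ => (hsumR2 ℓ hℓ).mul_left _]
          refine Finset.sum_congr rfl fun ℓ hℓ => ?_
          rw [tsum_mul_left, ← theta_eq x hx _ _ _ (hR2a ℓ hℓ).1 (hR2a ℓ hℓ).2 hc']
end

section
/- Let r ≥ 2 be an integer, let x > 0, and let t be real with t > 1−r. Then Θ(r,r,t,x) = Θ(0,r,t+r,x) + Σ_{ℓ=1}^{r−1} binom(r,ℓ) x^ℓ Θ(ℓ, r−ℓ, t+r, x) + x^{−t} Θ(0,r,t+r,1/x). -/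
open Real Filter Topology Finset

lemma pnat_summable_rpow {s : ℝ} (hs : 1 < s) :
    Summable fun n : ℕ+ => 1 / (n : ℝ) ^ s :=
  (Real.summable_one_div_nat_rpow.mpr hs).comp_injective
    (fun a b h => PNat.coe_injective h)

lemma summable_aux {p q c x a b : ℝ} (hx : 0 < x) (ha : 0 ≤ a) (hb : 0 ≤ b)
    (habc : a + b ≤ c) (hpa : 1 < p + a) (hqb : 1 < q + b) :
    Summable fun nm : ℕ+ × ℕ+ =>
      1 / ((nm.1 : ℝ) ^ p * (nm.2 : ℝ) ^ q * ((nm.1 : ℝ) + (nm.2 : ℝ) * x) ^ c) := by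
  have h1 : Summable fun n : ℕ+ => 1 / (n : ℝ) ^ (p + a) := pnat_summable_rpow hpa
  have h2 : Summable fun m : ℕ+ => 1 / x ^ b * (1 / (m : ℝ) ^ (q + b)) :=
    (pnat_summable_rpow hqb).mul_left _
  have hbase : Summable fun nm : ℕ+ × ℕ+ =>
      (1 / (nm.1 : ℝ) ^ (p + a)) * (1 / x ^ b * (1 / (nm.2 : ℝ) ^ (q + b))) := by
    refine h1.mul_of_nonneg h2 (fun n => by positivity) (fun m => by positivity)
  refine Summable.of_nonneg_of_le (fun nm => by positivity) (fun nm => ?_) hbase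
  obtain ⟨n, m⟩ := nm
  have hN : (0:ℝ) < (n:ℝ) := by exact_mod_cast n.pos
  have hN1 : (1:ℝ) ≤ (n:ℝ) := by exact_mod_cast n.one_le
  have hM : (0:ℝ) < (m:ℝ) := by exact_mod_cast m.pos
  have hM1 : (1:ℝ) ≤ (m:ℝ) := by exact_mod_cast m.one_le
  have hD : (0:ℝ) < (n:ℝ) + (m:ℝ) * x := by positivity
  have hMx : (0:ℝ) < (m:ℝ) * x := by positivity
  have hD1 : (1:ℝ) ≤ (n:ℝ) + (m:ℝ) * x := by linarith
  simp only
  rw [div_mul_div_comm, div_mul_div_comm, one_mul, one_mul]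
  apply one_div_le_one_div_of_le
  · positivity
  · -- need: N^(p+a) * (x^b * M^(q+b)) ≤ N^p * M^q * (N+Mx)^c
    rw [Real.rpow_add hN, Real.rpow_add hM]
    have key : (n:ℝ) ^ a * (x ^ b * (m:ℝ) ^ b) ≤ ((n:ℝ) + (m:ℝ) * x) ^ c := by
      have e1 : (n:ℝ) ^ a ≤ ((n:ℝ) + (m:ℝ) * x) ^ a :=
        Real.rpow_le_rpow hN.le (le_add_of_nonneg_right hMx.le) ha
      have e2 : ((m:ℝ) * x) ^ b ≤ ((n:ℝ) + (m:ℝ) * x) ^ b :=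
        Real.rpow_le_rpow hMx.le (le_add_of_nonneg_left hN.le) hb
      have e3 : (1:ℝ) ≤ ((n:ℝ) + (m:ℝ) * x) ^ (c - a - b) :=
        Real.one_le_rpow hD1 (by linarith)
      have ec : ((n:ℝ) + (m:ℝ) * x) ^ c
          = ((n:ℝ) + (m:ℝ) * x) ^ a * ((n:ℝ) + (m:ℝ) * x) ^ b
            * ((n:ℝ) + (m:ℝ) * x) ^ (c - a - b) := by
        rw [← Real.rpow_add hD, ← Real.rpow_add hD]; ring_nf
      have e2' : x ^ b * (m:ℝ) ^ b ≤ ((n:ℝ) + (m:ℝ) * x) ^ b := by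
        rwa [Real.mul_rpow hM.le hx.le, mul_comm ((m:ℝ)^b)] at e2
      calc (n:ℝ) ^ a * (x ^ b * (m:ℝ) ^ b)
          ≤ ((n:ℝ) + (m:ℝ) * x) ^ a * ((n:ℝ) + (m:ℝ) * x) ^ b := by
            apply mul_le_mul e1 e2' (by positivity) (by positivity)
        _ ≤ ((n:ℝ) + (m:ℝ) * x) ^ a * ((n:ℝ) + (m:ℝ) * x) ^ b
            * ((n:ℝ) + (m:ℝ) * x) ^ (c - a - b) :=
            le_mul_of_one_le_right (by positivity) e3
        _ = ((n:ℝ) + (m:ℝ) * x) ^ c := ec.symm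
    calc (n:ℝ) ^ p * (n:ℝ) ^ a * (x ^ b * ((m:ℝ) ^ q * (m:ℝ) ^ b))
        = ((n:ℝ) ^ p * (m:ℝ) ^ q) * ((n:ℝ) ^ a * (x ^ b * (m:ℝ) ^ b)) := by ring
      _ ≤ ((n:ℝ) ^ p * (m:ℝ) ^ q) * (((n:ℝ) + (m:ℝ) * x) ^ c) := by
          apply mul_le_mul_of_nonneg_left key (by positivity)
      _ = (n:ℝ) ^ p * (m:ℝ) ^ q * ((n:ℝ) + (m:ℝ) * x) ^ c := rfl

lemma expand_lemma (r : ℕ) (t N M x : ℝ) (hN : 0 < N) (hM : 0 < M) (hx : 0 < x) :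
    1 / (N ^ (r:ℝ) * M ^ (r:ℝ) * (N + M * x) ^ t)
      = ∑ ℓ ∈ range (r+1),
          (r.choose ℓ : ℝ) * x ^ ℓ / (N ^ (ℓ:ℝ) * M ^ ((r:ℝ) - ℓ) * (N + M * x) ^ (t + r)) := by
  have hD : 0 < N + M * x := by positivity
  have hDr : (N + M * x) ^ (t + (r:ℝ)) = (N + M * x) ^ t * (N + M * x) ^ r := by
    rw [Real.rpow_add hD, Real.rpow_natCast]
  have step : ∀ ℓ ∈ range (r+1),
      (r.choose ℓ : ℝ) * x ^ ℓ / (N ^ (ℓ:ℝ) * M ^ ((r:ℝ) - ℓ) * (N + M * x) ^ (t + r))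
        = ((M * x) ^ ℓ * N ^ (r - ℓ) * (r.choose ℓ : ℝ))
            * (1 / (N ^ r * M ^ r * ((N + M * x) ^ t * (N + M * x) ^ r))) := by
    intro ℓ hℓ
    rw [mem_range] at hℓ
    have hℓr : ℓ ≤ r := Nat.lt_succ_iff.mp hℓ
    have hcast : (r:ℝ) - (ℓ:ℝ) = ((r - ℓ : ℕ) : ℝ) := by
      push_cast [Nat.cast_sub hℓr]; ring
    rw [hDr, hcast, Real.rpow_natCast, Real.rpow_natCast]
    have hNr : N ^ r = N ^ ℓ * N ^ (r - ℓ) := by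
      rw [← pow_add, Nat.add_sub_cancel' hℓr]
    have hMr : M ^ r = M ^ (r - ℓ) * M ^ ℓ := by
      rw [← pow_add, Nat.sub_add_cancel hℓr]
    rw [hNr, hMr, mul_pow]
    have h1 : (0:ℝ) < N ^ ℓ := by positivity
    have h2 : (0:ℝ) < N ^ (r - ℓ) := by positivity
    have h3 : (0:ℝ) < M ^ (r - ℓ) := by positivity
    have h4 : (0:ℝ) < M ^ ℓ := by positivity
    have h5 : (0:ℝ) < (N + M * x) ^ t := Real.rpow_pos_of_pos hD t
    have h6 : (0:ℝ) < (N + M * x) ^ r := by positivity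
    field_simp
  rw [Finset.sum_congr rfl step, ← Finset.sum_mul, ← add_pow]
  have h5 : (0:ℝ) < (N + M * x) ^ t := Real.rpow_pos_of_pos hD t
  have h6 : (0:ℝ) < (N + M * x) ^ r := by positivity
  rw [Real.rpow_natCast, Real.rpow_natCast]
  have : M * x + N = N + M * x := by ring
  rw [this]
  field_simp

theorem stmt16 (r : ℕ) (hr : 2 ≤ r) (x : ℝ) (hx : 0 < x) (t : ℝ) (ht : 1 - (r : ℝ) < t) :
    Theta r r t x =
      Theta 0 r (t + r) x
        + (∑ ℓ ∈ Finset.Icc 1 (r - 1),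
            (r.choose ℓ : ℝ) * x ^ ℓ * Theta ℓ ((r : ℝ) - ℓ) (t + r) x)
        + x ^ (-t) * Theta 0 r (t + r) (1 / x) := by
  have hr1 : (1:ℝ) ≤ (r:ℝ) := by exact_mod_cast Nat.one_le_of_lt hr
  have hr2 : (2:ℝ) ≤ (r:ℝ) := by exact_mod_cast hr
  set c : ℝ := t + (r:ℝ) with hc
  have hc1 : (1:ℝ) < c := by simp only [hc]; linarith
  have hc0 : (0:ℝ) ≤ c := by linarith
  -- summability of the base functions
  have hsummable : ∀ ℓ : ℕ, ℓ ≤ r → Summable (fun nm : ℕ+ × ℕ+ =>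
      1 / ((nm.1:ℝ) ^ (ℓ:ℝ) * (nm.2:ℝ) ^ ((r:ℝ) - ℓ) * ((nm.1:ℝ) + (nm.2:ℝ) * x) ^ c)) := by
    intro ℓ hℓ
    have hℓr : (ℓ:ℝ) ≤ (r:ℝ) := by exact_mod_cast hℓ
    rcases Nat.eq_zero_or_pos ℓ with h0 | h1
    · subst h0
      refine summable_aux (a := c) (b := 0) hx hc0 le_rfl (by linarith) ?_ ?_
      · push_cast; linarith
      · push_cast; linarith
    rcases eq_or_lt_of_le hℓ with hre | hlt
    · subst hre
      refine summable_aux (a := 0) (b := c) hx le_rfl hc0 (by linarith) ?_ ?_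
      · push_cast; linarith
      · push_cast; linarith
    · have h1' : (1:ℝ) ≤ (ℓ:ℝ) := by exact_mod_cast h1
      have h2' : (ℓ:ℝ) + 1 ≤ (r:ℝ) := by exact_mod_cast hlt
      refine summable_aux (a := c/2) (b := c/2) hx (by linarith) (by linarith)
        (by linarith) (by linarith) (by linarith)
  -- the expansion terms
  set G : ℕ → ℕ+ × ℕ+ → ℝ := fun ℓ nm =>
    (r.choose ℓ : ℝ) * x ^ ℓ / ((nm.1:ℝ) ^ (ℓ:ℝ) * (nm.2:ℝ) ^ ((r:ℝ) - ℓ)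
      * ((nm.1:ℝ) + (nm.2:ℝ) * x) ^ c) with hG
  have hGsummable : ∀ ℓ : ℕ, ℓ ≤ r → Summable (G ℓ) := by
    intro ℓ hℓ
    refine ((hsummable ℓ hℓ).mul_left ((r.choose ℓ : ℝ) * x ^ ℓ)).congr fun nm => ?_
    simp only [hG, mul_one_div]
  -- pointwise expansion
  have hpoint : ∀ nm : ℕ+ × ℕ+,
      1 / ((nm.1:ℝ) ^ (r:ℝ) * (nm.2:ℝ) ^ (r:ℝ) * ((nm.1:ℝ) + (nm.2:ℝ) * x) ^ t)
        = ∑ ℓ ∈ range (r+1), G ℓ nm := by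
    intro nm
    have hN : (0:ℝ) < (nm.1:ℝ) := by exact_mod_cast nm.1.pos
    have hM : (0:ℝ) < (nm.2:ℝ) := by exact_mod_cast nm.2.pos
    exact expand_lemma r t _ _ x hN hM hx
  have hF : Summable (fun nm : ℕ+ × ℕ+ =>
      1 / ((nm.1:ℝ) ^ (r:ℝ) * (nm.2:ℝ) ^ (r:ℝ) * ((nm.1:ℝ) + (nm.2:ℝ) * x) ^ t)) := by
    refine (summable_sum (s := range (r+1)) (f := G)
      (fun ℓ hℓ => hGsummable ℓ (Nat.lt_succ_iff.mp (mem_range.mp hℓ)))).congr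
      fun nm => (hpoint nm).symm
  -- Theta as a tsum over products
  have thetaEq : ∀ (p q y : ℝ), Summable (fun nm : ℕ+ × ℕ+ =>
        1 / ((nm.1:ℝ) ^ p * (nm.2:ℝ) ^ q * ((nm.1:ℝ) + (nm.2:ℝ) * y) ^ c)) →
      Theta p q c y = ∑' nm : ℕ+ × ℕ+,
        1 / ((nm.1:ℝ) ^ p * (nm.2:ℝ) ^ q * ((nm.1:ℝ) + (nm.2:ℝ) * y) ^ c) := by
    intro p q y h
    rw [Theta]
    exact (Summable.tsum_prod h).symm
  have hTheta1 : Theta r r t x = ∑ ℓ ∈ range (r+1), ∑' nm : ℕ+ × ℕ+, G ℓ nm := by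
    have e1 : Theta (r:ℝ) (r:ℝ) t x = ∑' nm : ℕ+ × ℕ+,
        1 / ((nm.1:ℝ) ^ (r:ℝ) * (nm.2:ℝ) ^ (r:ℝ) * ((nm.1:ℝ) + (nm.2:ℝ) * x) ^ t) := by
      rw [Theta]; exact (Summable.tsum_prod hF).symm
    rw [e1, tsum_congr hpoint]
    exact Summable.tsum_finsetSum fun ℓ hℓ => hGsummable ℓ (Nat.lt_succ_iff.mp (mem_range.mp hℓ))
  -- identify the ℓ = 0 term
  have hT0 : ∑' nm : ℕ+ × ℕ+, G 0 nm = Theta 0 (r:ℝ) c x := by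
    have h0 : Summable (fun nm : ℕ+ × ℕ+ =>
        1 / ((nm.1:ℝ) ^ (0:ℝ) * (nm.2:ℝ) ^ ((r:ℝ)) * ((nm.1:ℝ) + (nm.2:ℝ) * x) ^ c)) := by
      refine (hsummable 0 (by omega)).congr fun nm => ?_
      norm_num
    rw [thetaEq 0 (r:ℝ) x h0]
    refine tsum_congr fun nm => ?_
    simp [hG]
  -- identify the middle terms
  have hTmid : ∀ ℓ : ℕ, ℓ ∈ Finset.Icc 1 (r-1) →
      ∑' nm : ℕ+ × ℕ+, G ℓ nm
        = (r.choose ℓ : ℝ) * x ^ ℓ * Theta ℓ ((r:ℝ) - ℓ) c x := by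
    intro ℓ hℓ
    rw [mem_Icc] at hℓ
    have hℓr : ℓ ≤ r := by omega
    rw [thetaEq (ℓ:ℝ) ((r:ℝ) - ℓ) x (hsummable ℓ hℓr), ← tsum_mul_left]
    refine tsum_congr fun nm => ?_
    simp only [hG, mul_one_div]
  -- identify the ℓ = r term
  have hswap : Summable (fun nm : ℕ+ × ℕ+ =>
      1 / ((nm.1:ℝ) ^ (0:ℝ) * (nm.2:ℝ) ^ ((r:ℝ)) * ((nm.1:ℝ) + (nm.2:ℝ) * (1/x)) ^ c)) := by
    refine (summable_aux (p := (0:ℝ)) (q := (r:ℝ)) (a := c) (b := 0)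
      (by positivity : (0:ℝ) < 1/x) hc0 le_rfl (by linarith) (by linarith) (by linarith))
  have hTr : ∑' nm : ℕ+ × ℕ+, G r nm = x ^ (-t) * Theta 0 (r:ℝ) c (1/x) := by
    have hpt : ∀ nm : ℕ+ × ℕ+, G r nm
        = x ^ (-t) * (1 / ((nm.2:ℝ) ^ (0:ℝ) * (nm.1:ℝ) ^ ((r:ℝ))
            * ((nm.2:ℝ) + (nm.1:ℝ) * (1/x)) ^ c)) := by
      intro nm
      have hN : (0:ℝ) < (nm.1:ℝ) := by exact_mod_cast nm.1.pos
      have hM : (0:ℝ) < (nm.2:ℝ) := by exact_mod_cast nm.2.pos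
      have hZ : (0:ℝ) < (nm.2:ℝ) + (nm.1:ℝ) * (1/x) := by positivity
      have hfac : (nm.1:ℝ) + (nm.2:ℝ) * x = x * ((nm.2:ℝ) + (nm.1:ℝ) * (1/x)) := by
        field_simp
        ring
      simp only [hG, Nat.choose_self, Nat.cast_one, one_mul, sub_self, Real.rpow_zero,
        Real.rpow_zero, mul_one, one_mul]
      rw [hfac, Real.mul_rpow hx.le hZ.le]
      rw [← Real.rpow_natCast x r]
      have hxx : x ^ ((r:ℕ):ℝ) = x ^ (-t) * x ^ c := by
        rw [← Real.rpow_add hx]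
        congr 1
        rw [hc]; ring
      rw [hxx]
      have e1 : ((nm.1:ℝ) ^ ((r:ℕ):ℝ)) ≠ 0 := by positivity
      have e2 : (x ^ c) ≠ 0 := by positivity
      have e3 : (((nm.2:ℝ) + (nm.1:ℝ) * (1/x)) ^ c) ≠ 0 := by positivity
      field_simp
    rw [tsum_congr hpt, tsum_mul_left, thetaEq 0 (r:ℝ) (1/x) hswap]
    congr 1
    rw [← Equiv.tsum_eq (Equiv.prodComm ℕ+ ℕ+)
      (fun nm : ℕ+ × ℕ+ => 1 / ((nm.1:ℝ) ^ (0:ℝ) * (nm.2:ℝ) ^ ((r:ℝ))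
        * ((nm.1:ℝ) + (nm.2:ℝ) * (1/x)) ^ c))]
    rfl
  -- assemble
  have hsplit : range (r+1) = insert 0 (insert r (Finset.Icc 1 (r-1))) := by
    ext ℓ
    simp only [mem_range, mem_insert, mem_Icc]
    omega
  have h0notin : (0:ℕ) ∉ insert r (Finset.Icc 1 (r-1)) := by
    simp only [mem_insert, mem_Icc]
    omega
  have hrnotin : r ∉ Finset.Icc 1 (r-1) := by
    simp only [mem_Icc]
    omega
  rw [hTheta1, hsplit, Finset.sum_insert h0notin, Finset.sum_insert hrnotin,
    hT0, hTr, Finset.sum_congr rfl hTmid]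
  ring
end

section
/- Let r ≥ 2 be an integer and let x > 0. Then F_r(x) + (−x)^{r−1} F_r(1/x) = ζ(r+1)((−x)^r − 1/x) − γζ(r) − Σ_{ℓ=2}^{r−1} ζ(ℓ) ζ(r−ℓ+1) (−x)^{ℓ−1} − γζ(r)(−x)^{r−1}. -/
open Real Filter Topology Finset

noncomputable def zetaR (s : ℝ) : ℝ := ∑' n : ℕ+, 1 / (n : ℝ) ^ s

noncomputable def psi (y : ℝ) : ℝ := deriv Real.Gamma y / Real.Gamma y

noncomputable def higherF (r : ℕ) (x : ℝ) : ℝ := ∑' n : ℕ+, psi ((n : ℝ) * x) / (n : ℝ) ^ r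

local notation "γ" => Real.eulerMascheroniConstant

noncomputable def harmonicR (n : ℕ) : ℝ := ∑ k ∈ Finset.range n, 1 / ((k : ℝ) + 1)

noncomputable def digSeq (n : ℕ) (x : ℝ) : ℝ :=
  (Real.log n - harmonicR n) +
    (-(1 / x) + ∑ k ∈ Finset.range n, x / (((k : ℝ) + 1) * (x + ((k : ℝ) + 1))))

noncomputable def dig (y : ℝ) : ℝ :=
  -γ + (-(1 / y) + ∑' k : ℕ, y / (((k : ℝ) + 1) * (y + ((k : ℝ) + 1))))

lemma digSeq_eq (n : ℕ) {y : ℝ} (hy : 0 < y) :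
    digSeq n y = Real.log n - ∑ m ∈ Finset.range (n + 1), 1 / (y + (m : ℝ)) := by
  have h1 : ∑ m ∈ Finset.range (n + 1), 1 / (y + (m : ℝ))
      = 1 / y + ∑ k ∈ Finset.range n, 1 / (y + ((k : ℝ) + 1)) := by
    rw [Finset.sum_range_succ']
    push_cast
    ring
  rw [h1, digSeq, harmonicR]
  have h2 : ∀ k ∈ Finset.range n,
      y / (((k : ℝ) + 1) * (y + ((k : ℝ) + 1))) = 1 / ((k : ℝ) + 1) - 1 / (y + ((k : ℝ) + 1)) := by
    intro k _
    have hk : (0:ℝ) < (k : ℝ) + 1 := by positivity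
    field_simp
    ring
  rw [Finset.sum_congr rfl h2, Finset.sum_sub_distrib]
  ring

lemma hasDerivAt_logGammaSeq (n : ℕ) {y : ℝ} (hy : 0 < y) :
    HasDerivAt (fun x => Real.BohrMollerup.logGammaSeq x n) (digSeq n y) y := by
  rw [digSeq_eq n hy]
  have h1 : HasDerivAt (fun x : ℝ => x * Real.log n + Real.log (Nat.factorial n)) (Real.log n) y := by
    simpa using ((hasDerivAt_id y).mul_const (Real.log n)).add_const (Real.log (Nat.factorial n))
  have h2 : HasDerivAt (fun x : ℝ => ∑ m ∈ Finset.range (n + 1), Real.log (x + (m : ℝ)))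
      (∑ m ∈ Finset.range (n + 1), 1 / (y + (m : ℝ))) y := by
    apply HasDerivAt.fun_sum
    intro m _
    have hpos : y + (m : ℝ) ≠ 0 := by positivity
    simpa using ((hasDerivAt_id y).add_const (m : ℝ)).log hpos
  exact (h1.sub h2)

lemma summable_one_div_succ_pow {p : ℕ} (hp : 2 ≤ p) :
    Summable (fun n : ℕ => 1 / ((n : ℝ) + 1) ^ p) := by
  have := (summable_nat_add_iff (f := fun n : ℕ => 1 / (n : ℝ) ^ p) 1).mpr
    (Real.summable_one_div_nat_pow.mpr hp)
  simpa using this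

lemma summable_one_div_succ_rpow32 :
    Summable (fun n : ℕ => 1 / ((n : ℝ) + 1) ^ (3/2 : ℝ)) := by
  have := (summable_nat_add_iff (f := fun n : ℕ => 1 / (n : ℝ) ^ (3/2 : ℝ)) 1).mpr
    (Real.summable_one_div_nat_rpow.mpr (by norm_num))
  simpa using this

lemma tendstoUniformlyOn_digSeq {K : Set ℝ} (hK : IsCompact K) (hKs : K ⊆ Set.Ioi 0) :
    TendstoUniformlyOn digSeq dig atTop K := by
  rcases K.eq_empty_or_nonempty with rfl | hne
  · simp [tendstoUniformlyOn_iff_tendsto]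
  obtain ⟨b, hbK, hb⟩ := hK.exists_isMaxOn hne continuousOn_id
  have hbx : ∀ z ∈ K, z ≤ b := fun z hz => hb hz
  have hb0 : 0 < b := hKs hbK
  -- piece 1 : constants
  have hc : Filter.Tendsto (fun n : ℕ => Real.log n - harmonicR n) atTop (𝓝 (-γ)) := by
    have h := Real.tendsto_harmonic_sub_log
    have h2 : Filter.Tendsto (fun n : ℕ => -((harmonic n : ℝ) - Real.log n)) atTop (𝓝 (-γ)) :=
      h.neg
    refine h2.congr (fun n => ?_)
    have : ((harmonic n : ℚ) : ℝ) = harmonicR n := by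
      rw [harmonic, harmonicR]
      push_cast
      simp [one_div]
    rw [this]; ring
  have p1 : TendstoUniformlyOn (fun (n : ℕ) (_ : ℝ) => Real.log n - harmonicR n)
      (fun _ => -γ) atTop K := by
    rw [Metric.tendstoUniformlyOn_iff]
    intro ε hε
    filter_upwards [Metric.tendsto_nhds.mp hc ε hε] with n hn z _
    simpa [dist_comm] using hn
  -- piece 2 : -(1/x), constant sequence
  have p2 : TendstoUniformlyOn (fun (_ : ℕ) (x : ℝ) => -(1 / x)) (fun x => -(1 / x)) atTop K := by
    rw [Metric.tendstoUniformlyOn_iff]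
    intro ε hε
    filter_upwards with n z _
    simpa using hε
  -- piece 3 : partial sums of the series
  have p3 : TendstoUniformlyOn
      (fun (n : ℕ) (x : ℝ) => ∑ k ∈ Finset.range n, x / (((k : ℝ) + 1) * (x + ((k : ℝ) + 1))))
      (fun x => ∑' k : ℕ, x / (((k : ℝ) + 1) * (x + ((k : ℝ) + 1)))) atTop K := by
    apply tendstoUniformlyOn_tsum_nat (u := fun k : ℕ => b * (1 / ((k : ℝ) + 1) ^ 2))
    · exact (summable_one_div_succ_pow le_rfl).mul_left b
    · intro k x hxK
      have hx0 : 0 < x := hKs hxK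
      have hk1 : (0:ℝ) < (k : ℝ) + 1 := by positivity
      have hxk : (0:ℝ) < x + ((k:ℝ)+1) := by positivity
      rw [Real.norm_eq_abs, abs_of_nonneg (by positivity)]
      have h1 : x / (((k : ℝ) + 1) * (x + ((k : ℝ) + 1))) ≤ b / (((k:ℝ)+1) * ((k:ℝ)+1)) := by
        apply div_le_div₀ (by positivity) (hbx x hxK) (by positivity)
        have : (k:ℝ)+1 ≤ x + ((k:ℝ)+1) := by linarith
        nlinarith
      calc x / (((k : ℝ) + 1) * (x + ((k : ℝ) + 1))) ≤ b / (((k:ℝ)+1) * ((k:ℝ)+1)) := h1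
        _ = b * (1 / ((k : ℝ) + 1) ^ 2) := by ring
  have := p1.add (p2.add p3)
  exact this

lemma hasDerivAt_logGamma {y : ℝ} (hy : 0 < y) :
    HasDerivAt (Real.log ∘ Real.Gamma) (dig y) y := by
  apply hasDerivAt_of_tendstoLocallyUniformlyOn isOpen_Ioi (l := atTop) (f := fun (n : ℕ) x =>
    Real.BohrMollerup.logGammaSeq x n) (f' := digSeq)
  · rw [tendstoLocallyUniformlyOn_iff_forall_isCompact isOpen_Ioi]
    intro K hKs hK
    exact tendstoUniformlyOn_digSeq hK hKs
  · filter_upwards with n x hx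
    exact hasDerivAt_logGammaSeq n hx
  · intro x hx
    exact Real.BohrMollerup.tendsto_log_gamma hx
  · exact hy

lemma psi_eq {y : ℝ} (hy : 0 < y) :
    deriv Real.Gamma y / Real.Gamma y = dig y := by
  have hGd : DifferentiableAt ℝ Real.Gamma y := by
    apply Real.differentiableAt_Gamma
    intro m
    have h := Nat.cast_nonneg (α := ℝ) m
    have : -(m:ℝ) < y := by linarith
    exact this.ne'
  have h2 : HasDerivAt (fun z => Real.log (Real.Gamma z))
      (deriv Real.Gamma y / Real.Gamma y) y :=
    hGd.hasDerivAt.log (Real.Gamma_pos_of_pos hy).ne'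
  exact h2.unique (hasDerivAt_logGamma hy)

noncomputable def Z (p : ℕ) : ℝ := ∑' n : ℕ, 1 / ((n : ℝ) + 1) ^ p

lemma zetaR_nat (p : ℕ) : zetaR p = Z p := by
  rw [zetaR, Z, ← Equiv.tsum_eq Equiv.pnatEquivNat.symm]
  refine tsum_congr fun n => ?_
  have h1 : ((Equiv.pnatEquivNat.symm n : ℕ+) : ℝ) = (n : ℝ) + 1 := by
    simp [Equiv.pnatEquivNat, Nat.succPNat]
  rw [h1, Real.rpow_natCast]

lemma rpow32 {y : ℝ} (hy : 0 < y) : y ^ (3/2 : ℝ) = y * Real.sqrt y := by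
  have h : (3/2 : ℝ) = 1 + 1/2 := by norm_num
  rw [h, Real.rpow_add hy, Real.rpow_one, ← Real.sqrt_eq_rpow]

lemma sqrt_bound {A B : ℝ} (hA : 0 ≤ A) (hB : 0 ≤ B) : Real.sqrt (A * B) ≤ A + B := by
  rw [show A + B = Real.sqrt ((A + B) ^ 2) from (Real.sqrt_sq (by positivity)).symm]
  apply Real.sqrt_le_sqrt
  nlinarith

lemma core_bound {A B P x : ℝ} (hA : 1 ≤ A) (hB : 1 ≤ B) (hx : 0 ≤ x) {e : ℕ} (he : 1 ≤ e)
    (hP : Real.sqrt A * Real.sqrt B * Real.sqrt x ≤ P) :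
    A ^ (3/2 : ℝ) * B ^ (3/2 : ℝ) * Real.sqrt x ≤ A ^ e * (B * P) := by
  have hA0 : (0:ℝ) < A := by linarith
  have hB0 : (0:ℝ) < B := by linarith
  have h1 : A ≤ A ^ e := le_self_pow₀ (by linarith) (by omega)
  have hPnn : 0 ≤ P := le_trans (by positivity) hP
  calc A ^ (3/2 : ℝ) * B ^ (3/2 : ℝ) * Real.sqrt x
      = (A * B) * (Real.sqrt A * Real.sqrt B * Real.sqrt x) := by
        rw [rpow32 hA0, rpow32 hB0]; ring
    _ ≤ (A * B) * P := by
        apply mul_le_mul_of_nonneg_left hP (by positivity)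
    _ ≤ (A ^ e * B) * P := by
        apply mul_le_mul_of_nonneg_right (mul_le_mul_of_nonneg_right h1 hB0.le) hPnn
    _ = A ^ e * (B * P) := by ring

lemma plus_bound {N M x : ℝ} (hN : 0 ≤ N) (hM : 0 ≤ M) (hx : 0 ≤ x) :
    Real.sqrt N * Real.sqrt M * Real.sqrt x ≤ M + N * x := by
  have h := sqrt_bound hM (mul_nonneg hN hx)
  rw [Real.sqrt_mul hM, Real.sqrt_mul hN] at h
  linarith [h]

noncomputable def tt (r : ℕ) (x : ℝ) (p : ℕ × ℕ) : ℝ :=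
  x / (((p.1 : ℝ) + 1) ^ (r - 1) * (((p.2 : ℝ) + 1) * (((p.2 : ℝ) + 1) + ((p.1 : ℝ) + 1) * x)))

noncomputable def rr (r : ℕ) (x : ℝ) (p : ℕ × ℕ) : ℝ :=
  (-1) ^ r * x ^ (r - 1) /
    (((p.2 : ℝ) + 1) ^ (r - 1) * (((p.1 : ℝ) + 1) * (((p.2 : ℝ) + 1) + ((p.1 : ℝ) + 1) * x)))

lemma div_master {x : ℝ} (hx : 0 < x) {c D : ℝ} (hc : 0 ≤ c) {n m : ℕ}
    (hD : ((n:ℝ)+1) ^ (3/2:ℝ) * ((m:ℝ)+1) ^ (3/2:ℝ) * Real.sqrt x ≤ D) :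
    c * x / D ≤ (c * Real.sqrt x) * (1 / ((n:ℝ)+1) ^ (3/2:ℝ) * (1 / ((m:ℝ)+1) ^ (3/2:ℝ))) := by
  have hN : (0:ℝ) < ((n:ℝ)+1) ^ (3/2:ℝ) := by positivity
  have hM : (0:ℝ) < ((m:ℝ)+1) ^ (3/2:ℝ) := by positivity
  have hD0 : (0:ℝ) < ((n:ℝ)+1) ^ (3/2:ℝ) * ((m:ℝ)+1) ^ (3/2:ℝ) * Real.sqrt x := by positivity
  have h1 : c * x / D ≤ c * x / (((n:ℝ)+1) ^ (3/2:ℝ) * ((m:ℝ)+1) ^ (3/2:ℝ) * Real.sqrt x) := by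
    apply div_le_div_of_nonneg_left (by positivity) hD0 hD
  refine h1.trans (le_of_eq ?_)
  rw [div_eq_iff (by positivity)]
  field_simp
  linear_combination (-c) * (Real.sq_sqrt hx.le)

lemma summable_master (c : ℝ) :
    Summable (fun p : ℕ × ℕ => c * (1 / ((p.1:ℝ)+1) ^ (3/2:ℝ) * (1 / ((p.2:ℝ)+1) ^ (3/2:ℝ)))) := by
  have h := (summable_one_div_succ_rpow32.mul_of_nonneg summable_one_div_succ_rpow32
    (fun n => by positivity) (fun n => by positivity))
  simpa [mul_assoc] using h.mul_left c

lemma tt_nonneg {r : ℕ} {x : ℝ} (hx : 0 < x) (p : ℕ × ℕ) : 0 ≤ tt r x p := by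
  rw [tt]; positivity

lemma one_le_cast1 (k : ℕ) : (1:ℝ) ≤ (k:ℝ) + 1 := by
  have := Nat.cast_nonneg (α := ℝ) k
  linarith

lemma tt_le {r : ℕ} (hr : 2 ≤ r) {x : ℝ} (hx : 0 < x) (p : ℕ × ℕ) :
    tt r x p ≤ Real.sqrt x * (1 / ((p.1:ℝ)+1) ^ (3/2:ℝ) * (1 / ((p.2:ℝ)+1) ^ (3/2:ℝ))) := by
  have hD : ((p.1:ℝ)+1) ^ (3/2:ℝ) * ((p.2:ℝ)+1) ^ (3/2:ℝ) * Real.sqrt x ≤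
      ((p.1:ℝ)+1) ^ (r-1) * (((p.2:ℝ)+1) * (((p.2:ℝ)+1) + ((p.1:ℝ)+1) * x)) := by
    apply core_bound (one_le_cast1 p.1) (one_le_cast1 p.2) hx.le (by omega)
    have := plus_bound (N := (p.1:ℝ)+1) (M := (p.2:ℝ)+1) (by positivity) (by positivity) hx.le
    linarith [this]
  have h := div_master hx (zero_le_one (α := ℝ)) hD
  simpa [tt] using h

lemma summable_tt {r : ℕ} (hr : 2 ≤ r) {x : ℝ} (hx : 0 < x) : Summable (tt r x) :=
  Summable.of_nonneg_of_le (tt_nonneg hx) (tt_le hr hx) (summable_master (Real.sqrt x))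

lemma rr_abs_le {r : ℕ} (hr : 2 ≤ r) {x : ℝ} (hx : 0 < x) (p : ℕ × ℕ) :
    |rr r x p| ≤ (x ^ (r-2) * Real.sqrt x) *
      (1 / ((p.2:ℝ)+1) ^ (3/2:ℝ) * (1 / ((p.1:ℝ)+1) ^ (3/2:ℝ))) := by
  have hden : (0:ℝ) < ((p.2:ℝ)+1) ^ (r-1) * (((p.1:ℝ)+1) * (((p.2:ℝ)+1) + ((p.1:ℝ)+1) * x)) := by
    positivity
  have habs : |rr r x p| = x ^ (r-1) /
      (((p.2:ℝ)+1) ^ (r-1) * (((p.1:ℝ)+1) * (((p.2:ℝ)+1) + ((p.1:ℝ)+1) * x))) := by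
    rw [rr, abs_div, abs_of_pos hden, abs_mul, abs_pow, abs_neg, abs_one, one_pow, one_mul,
      abs_pow, abs_of_pos hx]
  rw [habs]
  have hxr : x ^ (r-1) = x ^ (r-2) * x := by
    rw [← pow_succ]
    congr 1
    omega
  rw [hxr]
  apply div_master hx (by positivity)
  apply core_bound (one_le_cast1 p.2) (one_le_cast1 p.1) hx.le (by omega)
  have := plus_bound (N := (p.1:ℝ)+1) (M := (p.2:ℝ)+1) (by positivity) (by positivity) hx.le
  linarith [this]

lemma summable_rr {r : ℕ} (hr : 2 ≤ r) {x : ℝ} (hx : 0 < x) : Summable (rr r x) := by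
  rw [← summable_abs_iff]
  apply Summable.of_nonneg_of_le (fun p => abs_nonneg _) (rr_abs_le hr hx)
  exact (summable_master (x ^ (r-2) * Real.sqrt x)).congr (fun p => by ring)

lemma telescope (N : ℕ) {a b : ℝ} (ha : 0 < a) (hab : 0 < a + b) :
    1 / (a * (a + b)) =
      (∑ j ∈ Finset.range N, (-1) ^ j * b ^ j / a ^ (j + 2)) +
        (-1) ^ N * b ^ N / (a ^ (N + 1) * (a + b)) := by
  induction N with
  | zero => simp
  | succ n ih =>
    rw [ih, Finset.sum_range_succ]
    have ha' : a ≠ 0 := ha.ne'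
    have hab' : a + b ≠ 0 := hab.ne'
    field_simp
    ring

lemma prodZ {a b : ℕ} (ha : 2 ≤ a) (hb : 2 ≤ b) :
    ∑' p : ℕ × ℕ, (1 / ((p.1:ℝ)+1) ^ a * (1 / ((p.2:ℝ)+1) ^ b)) = Z a * Z b := by
  rw [Summable.tsum_prod ((summable_one_div_succ_pow ha).mul_of_nonneg (summable_one_div_succ_pow hb)
    (fun n => by positivity) (fun n => by positivity))]
  simp_rw [tsum_mul_left, tsum_mul_right]
  rfl

noncomputable def qq (r : ℕ) (x : ℝ) (j : ℕ) (p : ℕ × ℕ) : ℝ :=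
  (-1) ^ j * x ^ (j + 1) * (1 / ((p.1:ℝ)+1) ^ (r - 1 - j) * (1 / ((p.2:ℝ)+1) ^ (j + 2)))

lemma tt_decomp {r : ℕ} (hr : 2 ≤ r) {x : ℝ} (hx : 0 < x) (p : ℕ × ℕ) :
    tt r x p = (∑ j ∈ Finset.range (r - 2), qq r x j p) + rr r x p := by
  set N : ℝ := (p.1:ℝ) + 1 with hNdef
  set M : ℝ := (p.2:ℝ) + 1 with hMdef
  have hN : (0:ℝ) < N := by rw [hNdef]; positivity
  have hM : (0:ℝ) < M := by rw [hMdef]; positivity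
  have htel := telescope (r - 2) (a := M) (b := N * x) hM (by positivity)
  have h0 : tt r x p = (x / N ^ (r-1)) * (1 / (M * (M + N * x))) := by
    rw [tt]
    field_simp
    rw [hNdef, hMdef]
  rw [h0, htel, mul_add, Finset.mul_sum]
  congr 1
  · apply Finset.sum_congr rfl
    intro j hj
    rw [Finset.mem_range] at hj
    have hsplit : N ^ (r - 1) = N ^ j * N ^ (r - 1 - j) := by
      rw [← pow_add]
      congr 1
      omega
    rw [qq, hsplit, mul_pow]
    have hxj : x ^ (j+1) = x ^ j * x := by rw [pow_succ]
    rw [hxj]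
    field_simp
    ring
  · have hsplitN : N ^ (r - 1) = N ^ (r - 2) * N := by
      rw [← pow_succ]
      congr 1
      omega
    have hsplitx : x ^ (r - 1) = x ^ (r - 2) * x := by
      rw [← pow_succ]
      congr 1
      omega
    have hsign : ((-1:ℝ)) ^ r = (-1) ^ (r - 2) := by
      conv_lhs => rw [show r = (r - 2) + 2 by omega]
      rw [pow_add]
      norm_num
    have hM1 : M ^ (r-2+1) = M ^ (r-2) * M := pow_succ M (r-2)
    have hM2 : M ^ (r-1) = M ^ (r-2) * M := by rw [← pow_succ]; congr 1; omega
    rw [rr, hsign, hsplitN, hsplitx, hM1, hM2, mul_pow]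
    field_simp
    ring

lemma summable_qq {r j : ℕ} (hj : j < r - 2) {x : ℝ} : Summable (qq r x j) := by
  have h := ((summable_one_div_succ_pow (p := r - 1 - j) (by omega)).mul_of_nonneg
    (summable_one_div_succ_pow (p := j + 2) (by omega))
    (fun n => by positivity) (fun n => by positivity))
  exact h.mul_left _

lemma tsum_qq {r j : ℕ} (hj : j < r - 2) {x : ℝ} :
    ∑' p : ℕ × ℕ, qq r x j p = (-1) ^ j * x ^ (j + 1) * (Z (r - 1 - j) * Z (j + 2)) := by
  rw [show (fun p : ℕ × ℕ => qq r x j p) = fun p : ℕ × ℕ =>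
      (-1) ^ j * x ^ (j + 1) * (1 / ((p.1:ℝ)+1) ^ (r - 1 - j) * (1 / ((p.2:ℝ)+1) ^ (j + 2)))
    from rfl, tsum_mul_left, prodZ (by omega) (by omega)]

lemma tt_split {r : ℕ} (hr : 2 ≤ r) {x : ℝ} (hx : 0 < x) :
    ∑' p : ℕ × ℕ, tt r x p =
      (∑ j ∈ Finset.range (r - 2), (-1) ^ j * x ^ (j + 1) * (Z (r - 1 - j) * Z (j + 2))) +
        ∑' p : ℕ × ℕ, rr r x p := by
  have hfun : tt r x = fun p => (∑ j ∈ Finset.range (r - 2), qq r x j p) + rr r x p :=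
    funext (tt_decomp hr hx)
  rw [hfun, Summable.tsum_add (summable_sum (fun j hj => summable_qq (Finset.mem_range.mp hj)))
    (summable_rr hr hx),
    Summable.tsum_finsetSum (fun j hj => summable_qq (Finset.mem_range.mp hj))]
  congr 1
  exact Finset.sum_congr rfl (fun j hj => tsum_qq (Finset.mem_range.mp hj))

lemma rr_swap {r : ℕ} (hr : 2 ≤ r) {x : ℝ} (hx : 0 < x) :
    ∑' p : ℕ × ℕ, rr r x p = -((-x) ^ (r - 1) * ∑' p : ℕ × ℕ, tt r (1/x) p) := by
  have h1 : ∑' p : ℕ × ℕ, rr r x p = ∑' p : ℕ × ℕ, rr r x ((Equiv.prodComm ℕ ℕ) p) :=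
    (Equiv.tsum_eq (Equiv.prodComm ℕ ℕ) (rr r x)).symm
  rw [h1]
  have h2 : ∀ p : ℕ × ℕ, rr r x ((Equiv.prodComm ℕ ℕ) p)
      = (-(-x) ^ (r - 1)) * tt r (1/x) p := by
    intro p
    have hN : (0:ℝ) < (p.1:ℝ) + 1 := by positivity
    have hM : (0:ℝ) < (p.2:ℝ) + 1 := by positivity
    rw [rr, tt]
    simp only [Equiv.prodComm_apply, Prod.snd_swap, Prod.fst_swap]
    rw [neg_pow x (r-1)]
    rw [show ((-1:ℝ)) ^ r = -(-1) ^ (r-1) by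
      conv_lhs => rw [show r = (r-1)+1 by omega]
      rw [pow_succ]; ring]
    field_simp
    try ring
    try tauto
  rw [tsum_congr h2, tsum_mul_left]
  ring

lemma psi_eq' {y : ℝ} (hy : 0 < y) : psi y = dig y := psi_eq hy

lemma pcast (n : ℕ) : ((Equiv.pnatEquivNat.symm n : ℕ+) : ℝ) = (n : ℝ) + 1 := by
  simp [Equiv.pnatEquivNat, Nat.succPNat]

lemma higherF_eq {r : ℕ} (hr : 2 ≤ r) {x : ℝ} (hx : 0 < x) :
    higherF r x = -γ * Z r - (1/x) * Z (r+1) + ∑' p : ℕ × ℕ, tt r x p := by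
  have sA : Summable (fun n : ℕ => -γ * (1 / ((n:ℝ)+1) ^ r)) :=
    (summable_one_div_succ_pow hr).mul_left _
  have sB : Summable (fun n : ℕ => (-(1/x)) * (1 / ((n:ℝ)+1) ^ (r+1))) :=
    (summable_one_div_succ_pow (by omega)).mul_left _
  have sC : Summable (fun n : ℕ => ∑' k : ℕ, tt r x (n, k)) :=
    ((summable_prod_of_nonneg (fun p => tt_nonneg hx p)).mp (summable_tt hr hx)).2
  have hterm : ∀ n : ℕ, psi (((n:ℝ)+1) * x) / ((n:ℝ)+1) ^ r
      = -γ * (1 / ((n:ℝ)+1) ^ r) + (-(1/x)) * (1 / ((n:ℝ)+1) ^ (r+1))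
        + ∑' k : ℕ, tt r x (n, k) := by
    intro n
    have hN : (0:ℝ) < (n:ℝ)+1 := by positivity
    have hy : 0 < ((n:ℝ)+1) * x := by positivity
    have e1 : (-γ)/(((n:ℝ)+1)^r) = -γ * (1/((n:ℝ)+1)^r) := by ring
    have e2 : (-(1/(((n:ℝ)+1)*x)))/(((n:ℝ)+1)^r) = (-(1/x)) * (1/((n:ℝ)+1)^(r+1)) := by
      rw [pow_succ]
      field_simp
    have e3 : (∑' k : ℕ, ((n:ℝ)+1)*x/((((k:ℝ)+1))*(((n:ℝ)+1)*x+((k:ℝ)+1))))/(((n:ℝ)+1)^r)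
        = ∑' k : ℕ, tt r x (n, k) := by
      rw [← tsum_div_const]
      refine tsum_congr fun k => ?_
      rw [tt]
      have hK : (0:ℝ) < (k:ℝ)+1 := by positivity
      have hsplit : ((n:ℝ)+1) ^ r = ((n:ℝ)+1) ^ (r-1) * ((n:ℝ)+1) := by
        rw [← pow_succ]
        congr 1
        omega
      rw [div_div, hsplit]
      rw [div_eq_div_iff (by positivity) (by positivity)]
      ring
    rw [psi_eq' hy, dig, add_div, add_div, e1, e2, e3]
    ring
  rw [higherF, ← Equiv.tsum_eq Equiv.pnatEquivNat.symm, tsum_congr (fun n => by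
    rw [pcast n, hterm n]), Summable.tsum_add (sA.add sB) sC, Summable.tsum_add sA sB, tsum_mul_left, tsum_mul_left,
    ← Summable.tsum_prod (summable_tt hr hx)]
  have hZ1 : (∑' n : ℕ, 1 / ((n:ℝ)+1) ^ r) = Z r := rfl
  have hZ2 : (∑' n : ℕ, 1 / ((n:ℝ)+1) ^ (r+1)) = Z (r+1) := rfl
  rw [hZ1, hZ2]
  ring

theorem stmt18 (r : ℕ) (hr : 2 ≤ r) (x : ℝ) (hx : 0 < x) :
    higherF r x + (-x) ^ (r - 1) * higherF r (1 / x) =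
      zetaR (r + 1) * ((-x) ^ r - 1 / x)
        - Real.eulerMascheroniConstant * zetaR r
        - (∑ ℓ ∈ Finset.Icc 2 (r - 1), zetaR ℓ * zetaR ((r : ℝ) - ℓ + 1) * (-x) ^ (ℓ - 1))
        - Real.eulerMascheroniConstant * zetaR r * (-x) ^ (r - 1) := by
  have hx' : (0:ℝ) < 1/x := by positivity
  have h1 := higherF_eq hr hx
  have h2 := higherF_eq hr hx'
  have hsplit := tt_split hr hx
  have hswap := rr_swap hr hx
  have hZr : zetaR r = Z r := zetaR_nat r
  have hZr1 : zetaR ((r:ℝ) + 1) = Z (r+1) := by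
    rw [show ((r:ℝ) + 1) = ((r+1 : ℕ) : ℝ) by push_cast; ring]
    exact zetaR_nat (r+1)
  have hIcc : (∑ ℓ ∈ Finset.Icc 2 (r-1), zetaR ℓ * zetaR ((r:ℝ) - ℓ + 1) * (-x) ^ (ℓ-1))
      = ∑ j ∈ Finset.range (r-2), -((-1) ^ j * x ^ (j+1) * (Z (r-1-j) * Z (j+2))) := by
    refine Finset.sum_bij' (i := fun ℓ _ => ℓ - 2) (j := fun j _ => j + 2)
      ?_ ?_ ?_ ?_ ?_
    · intro a ha
      simp only [Finset.mem_Icc] at ha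
      simp only [Finset.mem_range]
      omega
    · intro a ha
      simp only [Finset.mem_range] at ha
      simp only [Finset.mem_Icc]
      omega
    · intro a ha
      simp only [Finset.mem_Icc] at ha
      show a - 2 + 2 = a
      omega
    · intro a ha
      simp only [Finset.mem_range] at ha
      show a + 2 - 2 = a
      omega
    · intro ℓ hℓ
      simp only [Finset.mem_Icc] at hℓ
      have hℓr : ℓ ≤ r := by omega
      have hc1 : zetaR ℓ = Z (ℓ - 2 + 2) := by
        rw [show (ℓ - 2 + 2) = ℓ by omega]
        exact zetaR_nat ℓ
      have hc2 : zetaR ((r:ℝ) - ℓ + 1) = Z (r - 1 - (ℓ - 2)) := by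
        rw [show ((r:ℝ) - ℓ + 1) = ((r - ℓ + 1 : ℕ) : ℝ) by
          push_cast [Nat.cast_sub hℓr]; ring]
        rw [show (r - ℓ + 1) = (r - 1 - (ℓ - 2)) by omega]
        exact zetaR_nat _
      have hc3 : (-x) ^ (ℓ - 1) = (-x) ^ ((ℓ - 2) + 1) := by
        congr 1
        omega
      rw [hc1, hc2, hc3, show ((ℓ-2)+1) = (ℓ-2)+1 from rfl]
      rw [show (-x) ^ ((ℓ-2)+1) = -((-1)^(ℓ-2) * x^((ℓ-2)+1)) by
        rw [neg_pow x ((ℓ-2)+1), pow_succ]; ring]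
      ring
  have hpow : (-x) ^ r = (-x) ^ (r-1) * (-x) := by
    rw [← pow_succ]
    congr 1
    omega
  rw [h1, h2, one_div_one_div, hsplit, hswap, hZr, hZr1, hIcc, hpow,
    Finset.sum_neg_distrib]
  ring
end

section
/- For every x > 0, F(x) + F(1/x) = 2F(1) + (1/2) log²(x) − (π²/(6x))(x−1)². -/
open Real Filter Topology Finset

noncomputable def HerglotzF (x : ℝ) : ℝ :=
  ∑' n : ℕ+, (psi ((n : ℝ) * x) - Real.log ((n : ℝ) * x)) / (n : ℝ)

namespace ZagierAux

/-- Telescoping sums of antitone sequences with limit `L`. -/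
lemma hasSum_telescope {g : ℕ → ℝ} {L : ℝ} (hg : Tendsto g atTop (𝓝 L))
    (hmono : ∀ n, g (n + 1) ≤ g n) : HasSum (fun n => g n - g (n + 1)) (g 0 - L) := by
  have hanti : Antitone g := antitone_nat_of_succ_le hmono
  have hLle : ∀ n, L ≤ g n := fun n =>
    le_of_tendsto hg (eventually_atTop.2 ⟨n, fun m hm => hanti hm⟩)
  have hpart : ∀ N, ∑ i ∈ range N, (g i - g (i + 1)) = g 0 - g N := fun N =>
    Finset.sum_range_sub' g N
  have hsummable : Summable (fun n => g n - g (n + 1)) := by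
    apply summable_of_sum_range_le (c := g 0 - L) (fun n => sub_nonneg.2 (hmono n))
    intro n; rw [hpart]; linarith [hLle n]
  rw [hsummable.hasSum_iff_tendsto_nat]
  simp_rw [hpart]
  exact tendsto_const_nhds.sub hg

lemma tendsto_inv_add (w x : ℝ) (hx : 0 < x) :
    Tendsto (fun k : ℕ => 1 / (w + k * x)) atTop (𝓝 0) := by
  simp_rw [one_div]
  apply Tendsto.inv_tendsto_atTop
  exact tendsto_atTop_add_const_left _ w (tendsto_natCast_atTop_atTop.atTop_mul_const hx)

lemma inv_sub_inv_step {a x : ℝ} (ha : 0 < a) (hx : 0 < x) :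
    1 / a - 1 / (a + x) = x / (a * (a + x)) := by
  have h2 : 0 < a + x := by linarith
  field_simp; ring

/-- key telescoping instance -/
lemma hasSum_teleinv (w x : ℝ) (hw : 0 < w) (hx : 0 < x) :
    HasSum (fun k : ℕ => 1 / (w + k * x) - 1 / (w + (k + 1) * x)) (1 / w) := by
  have h0 : ∀ k : ℕ, (0:ℝ) < w + k * x := fun k => by positivity
  have hmono : ∀ k : ℕ, 1 / (w + (↑(k+1) : ℝ) * x) ≤ 1 / (w + k * x) := by
    intro k
    apply one_div_le_one_div_of_le (h0 k)
    push_cast; nlinarith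
  have := hasSum_telescope (g := fun k : ℕ => 1 / (w + k * x)) (tendsto_inv_add w x hx) hmono
  simp only [Nat.cast_zero, zero_mul, add_zero, Nat.cast_add, Nat.cast_one, sub_zero] at this
  exact this


lemma aux_le1 {a x : ℝ} (ha : 0 < a) (hx : 0 < x) :
    (1/x) * (1 / a - 1 / (a + x)) = 1 / (a * (a + x)) := by
  rw [inv_sub_inv_step ha hx]
  field_simp

lemma aux_le2 {a x : ℝ} (ha : 0 < a) (hx : 0 < x) :
    1 / (a + x) ^ 2 ≤ (1/x) * (1 / a - 1 / (a + x)) := by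
  rw [aux_le1 ha hx]
  apply one_div_le_one_div_of_le (by positivity)
  nlinarith

lemma aux_le3 {a x : ℝ} (ha : 0 < a) (hx : 0 < x) :
    (1/x) * (1 / a - 1 / (a + x)) ≤ 1 / a ^ 2 := by
  rw [aux_le1 ha hx]
  apply one_div_le_one_div_of_le (by positivity)
  nlinarith

lemma sq_term_le (w x : ℝ) (hw : 0 < w) (hx : 0 < x) (k : ℕ) :
    1 / (w + ((k:ℝ) + 1) * x) ^ 2 ≤ (1/x) * (1 / (w + k * x) - 1 / (w + (k + 1) * x)) := by
  have h0 : (0:ℝ) < w + k * x := by positivity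
  have e : w + ((k:ℝ) + 1) * x = (w + k * x) + x := by ring
  rw [e]
  exact aux_le2 h0 hx

lemma summable_inv_sq_shift (w x : ℝ) (hw : 0 < w) (hx : 0 < x) :
    Summable (fun k : ℕ => 1 / (w + ((k:ℝ) + 1) * x) ^ 2) := by
  refine Summable.of_nonneg_of_le (fun k => by positivity) (sq_term_le w x hw hx)
    (((hasSum_teleinv w x hw hx).summable).mul_left (1/x))

lemma tsum_inv_sq_le (w x : ℝ) (hw : 0 < w) (hx : 0 < x) :
    ∑' k : ℕ, 1 / (w + ((k:ℝ) + 1) * x) ^ 2 ≤ 1 / (x * w) := by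
  have h := ((hasSum_teleinv w x hw hx).mul_left (1/x))
  have h2 := Summable.tsum_le_tsum (sq_term_le w x hw hx) (summable_inv_sq_shift w x hw hx) h.summable
  rw [h.tsum_eq] at h2
  calc _ ≤ 1/x * (1/w) := h2
    _ = 1/(x*w) := by rw [one_div_mul_one_div]

lemma le_tsum_inv_sq (w x : ℝ) (hw : 0 < w) (hx : 0 < x) :
    1 / (x * (w + x)) ≤ ∑' k : ℕ, 1 / (w + ((k:ℝ) + 1) * x) ^ 2 := by
  have hw' : 0 < w + x := by linarith
  have h := ((hasSum_teleinv (w + x) x hw' hx).mul_left (1/x))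
  have hle : ∀ k : ℕ, (1/x) * (1 / (w + x + k * x) - 1 / (w + x + (k + 1) * x))
      ≤ 1 / (w + ((k:ℝ) + 1) * x) ^ 2 := by
    intro k
    have h0 : (0:ℝ) < w + x + k * x := by positivity
    have e : w + ((k:ℝ) + 1) * x = w + x + k * x := by ring
    have e2 : w + x + ((k:ℝ) + 1) * x = (w + x + k * x) + x := by ring
    rw [e, e2]
    exact aux_le3 h0 hx
  have h2 := Summable.tsum_le_tsum hle h.summable (summable_inv_sq_shift w x hw hx)
  rw [h.tsum_eq] at h2
  calc 1/(x*(w+x)) = 1/x * (1/(w+x)) := by rw [one_div_mul_one_div]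
    _ ≤ _ := h2

/-! ### the function `c` and its series -/

noncomputable def c (u : ℝ) : ℝ := 1/u - (Real.log (u+1) - Real.log u)

lemma log_sub_log_le {u : ℝ} (hu : 0 < u) : Real.log (u+1) - Real.log u ≤ 1/u := by
  rw [← Real.log_div (by linarith) (ne_of_gt hu)]
  have h := Real.log_le_sub_one_of_pos (x := (u+1)/u) (by positivity)
  have : (u+1)/u - 1 = 1/u := by field_simp; ring
  linarith

lemma le_log_sub_log {u : ℝ} (hu : 0 < u) : 1/(u+1) ≤ Real.log (u+1) - Real.log u := by
  have h := Real.log_le_sub_one_of_pos (x := u/(u+1)) (by positivity)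
  rw [Real.log_div (ne_of_gt hu) (by linarith)] at h
  have e : u/(u+1) - 1 = -(1/(u+1)) := by field_simp; ring
  linarith

lemma c_nonneg {u : ℝ} (hu : 0 < u) : 0 ≤ c u := by
  have := log_sub_log_le hu
  simp only [c]; linarith

lemma c_le {u : ℝ} (hu : 0 < u) : c u ≤ 1/u - 1/(u+1) := by
  have := le_log_sub_log hu
  simp only [c]; linarith

lemma hasSum_tele1 (y : ℝ) (hy : 0 < y) :
    HasSum (fun k : ℕ => 1 / (y + k) - 1 / (y + k + 1)) (1/y) := by
  have h := hasSum_teleinv y 1 hy one_pos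
  have e : (fun k : ℕ => 1 / (y + k) - 1 / (y + k + 1))
      = fun k : ℕ => 1 / (y + k * 1) - 1 / (y + (k + 1) * 1) := by
    funext k; ring_nf
  rw [e]
  exact h

lemma summable_c (y : ℝ) (hy : 0 < y) : Summable (fun k : ℕ => c (y + k)) := by
  refine Summable.of_nonneg_of_le (fun k => c_nonneg (by positivity)) (fun k => ?_)
    (hasSum_tele1 y hy).summable
  have := c_le (u := y + k) (by positivity)
  simpa using this

lemma tsum_c_le (y : ℝ) (hy : 0 < y) : ∑' k : ℕ, c (y + k) ≤ 1/y := by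
  have h := hasSum_tele1 y hy
  have h2 := Summable.tsum_le_tsum (f := fun k : ℕ => c (y + k)) (fun k => by simpa using c_le (u := y + (k:ℝ)) (by positivity))
    (summable_c y hy) h.summable
  rwa [h.tsum_eq] at h2

lemma tsum_c_nonneg (y : ℝ) (hy : 0 < y) : 0 ≤ ∑' k : ℕ, c (y + k) :=
  tsum_nonneg (fun k => c_nonneg (by positivity))

/-! ### the digamma series -/

lemma log_GammaSeq (t : ℝ) (ht : 0 < t) (n : ℕ) (hn : 1 ≤ n) :
    Real.log (Real.GammaSeq t n)
      = t * Real.log n + Real.log (Nat.factorial n) - ∑ j ∈ range (n + 1), Real.log (t + j) := by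
  have hprodpos : (0:ℝ) < ∏ j ∈ range (n+1), (t + (j:ℝ)) :=
    Finset.prod_pos (fun j _ => by positivity)
  have hnpos : (0:ℝ) < (n:ℝ) := by exact_mod_cast hn
  have hfac : (0:ℝ) < ((Nat.factorial n : ℕ) : ℝ) := by exact_mod_cast (Nat.factorial_pos n)
  rw [Real.GammaSeq, Real.log_div (by positivity) (ne_of_gt hprodpos),
    Real.log_mul (by positivity) (ne_of_gt hfac), Real.log_rpow hnpos,
    Real.log_prod (fun j _ => ne_of_gt (by positivity))]

lemma hasDerivAt_fN (n : ℕ) (t : ℝ) (ht : 0 < t) :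
    HasDerivAt (fun s => s * Real.log n + Real.log (Nat.factorial n) - ∑ j ∈ range (n + 1), Real.log (s + j))
      (Real.log n - ∑ j ∈ range (n + 1), 1 / (t + j)) t := by
  have h1 : HasDerivAt (fun s : ℝ => s * Real.log n + Real.log (Nat.factorial n)) (Real.log n) t := by
    simpa using ((hasDerivAt_id t).mul_const (Real.log n)).add_const (Real.log (Nat.factorial n))
  have h2 : HasDerivAt (fun s : ℝ => ∑ j ∈ range (n + 1), Real.log (s + j))
      (∑ j ∈ range (n + 1), 1 / (t + j)) t := by
    apply HasDerivAt.fun_sum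
    intro j _
    have hj : t + (j:ℝ) ≠ 0 := ne_of_gt (by positivity)
    simpa using (((hasDerivAt_id t).add_const (j:ℝ)).log hj)
  simpa using h1.fun_sub h2

lemma sum_c_eq (t : ℝ) (ht : 0 < t) (n : ℕ) :
    ∑ j ∈ range (n + 1), c (t + j)
      = (∑ j ∈ range (n + 1), 1 / (t + j)) - (Real.log (t + n + 1) - Real.log t) := by
  have htel : ∑ j ∈ range (n + 1), (Real.log (t + j + 1) - Real.log (t + j))
      = Real.log (t + n + 1) - Real.log t := by
    have h := Finset.sum_range_sub (f := fun j : ℕ => Real.log (t + j)) (n + 1)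
    simp only [Nat.cast_add, Nat.cast_one, Nat.cast_zero, add_zero, ← add_assoc] at h
    exact h
  have : ∑ j ∈ range (n + 1), c (t + j)
      = (∑ j ∈ range (n + 1), 1 / (t + j))
        - ∑ j ∈ range (n + 1), (Real.log (t + j + 1) - Real.log (t + j)) := by
    rw [← Finset.sum_sub_distrib]
    apply Finset.sum_congr rfl
    intro j _
    simp only [c]
  rw [this, htel]

lemma psi_eq (y : ℝ) (hy : 0 < y) :
    psi y = Real.log y - ∑' k : ℕ, c (y + k) := by
  have ha : 0 < y/2 := by positivity
  have hyab : y ∈ Set.Ioo (y/2) (y+1) := ⟨by linarith, by linarith⟩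
  set g' : ℝ → ℝ := fun t => Real.log t - ∑' k : ℕ, c (t + k) with hg'def
  have key : HasDerivAt (fun t => Real.log (Real.Gamma t)) (g' y) y := by
    refine hasDerivAt_of_tendstoUniformlyOn (l := (atTop : Filter ℕ)) (isOpen_Ioo)
      (f := fun (n : ℕ) (t : ℝ) =>
        t * Real.log n + Real.log (Nat.factorial n) - ∑ j ∈ range (n + 1), Real.log (t + j))
      (f' := fun (n : ℕ) (t : ℝ) => Real.log n - ∑ j ∈ range (n + 1), 1 / (t + j))
      ?_ ?_ ?_ hyab
    · -- uniform convergence of derivatives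
      rw [Metric.tendstoUniformlyOn_iff]
      intro ε hε
      have htend : Tendsto (fun n : ℕ => (y + 3) / n) atTop (𝓝 0) :=
        tendsto_const_div_atTop_nhds_zero_nat (y + 3)
      filter_upwards [eventually_ge_atTop 1, htend.eventually (gt_mem_nhds hε)] with n hn1 hnε
      intro t htmem
      obtain ⟨ht1, ht2⟩ := htmem
      have ht : 0 < t := lt_trans ha ht1
      have hnR : (1:ℝ) ≤ (n:ℝ) := by exact_mod_cast hn1
      have hnpos : (0:ℝ) < n := by linarith
      -- tail splitting
      have hsplit := Summable.sum_add_tsum_nat_add (f := fun k : ℕ => c (t + k)) (n + 1)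
        (summable_c t ht)
      have htail_eq : ∑' k : ℕ, c (t + ↑(k + (n+1))) = ∑' k : ℕ, c ((t + n + 1) + k) := by
        apply tsum_congr
        intro k
        congr 1
        push_cast
        ring
      have htn1 : (0:ℝ) < t + n + 1 := by positivity
      have htail_le : ∑' k : ℕ, c (t + ↑(k + (n+1))) ≤ 1 / n := by
        rw [htail_eq]
        refine le_trans (tsum_c_le _ htn1) ?_
        apply one_div_le_one_div_of_le hnpos
        linarith
      have htail_nonneg : 0 ≤ ∑' k : ℕ, c (t + ↑(k + (n+1))) := by
        rw [htail_eq]; exact tsum_c_nonneg _ htn1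
      -- log part
      have hlog_le : Real.log (t + n + 1) - Real.log n ≤ (t + 1) / n := by
        rw [← Real.log_div (ne_of_gt htn1) (ne_of_gt hnpos)]
        have h := Real.log_le_sub_one_of_pos (x := (t + n + 1)/n) (by positivity)
        have e : (t + n + 1)/n - 1 = (t + 1)/n := by field_simp; ring
        linarith
      have hlog_nonneg : 0 ≤ Real.log (t + n + 1) - Real.log n := by
        have h := Real.log_le_log hnpos (by linarith : (n:ℝ) ≤ t + n + 1)
        linarith
      -- the key identity
      have hkey : g' t - (Real.log n - ∑ j ∈ range (n + 1), 1 / (t + j))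
          = -(∑' k : ℕ, c (t + ↑(k + (n+1)))) + (Real.log (t + n + 1) - Real.log n) := by
        have hsum_c := sum_c_eq t ht n
        simp only [hg'def]
        have : (∑' k : ℕ, c (t + k))
            = ∑ j ∈ range (n+1), c (t + j) + ∑' k : ℕ, c (t + ↑(k + (n+1))) := hsplit.symm
        rw [this, hsum_c]
        ring
      rw [Real.dist_eq, hkey]
      have h1n : (0:ℝ) < 1/n := by positivity
      have htn : (0:ℝ) ≤ (t+1)/n := by positivity
      have habs : |(-(∑' k : ℕ, c (t + ↑(k + (n+1))))) + (Real.log (t + n + 1) - Real.log n)|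
          ≤ 1/n + (t+1)/n := by
        apply abs_le.mpr
        constructor
        · linarith
        · linarith
      calc |(-(∑' k : ℕ, c (t + ↑(k + (n+1))))) + (Real.log (t + n + 1) - Real.log n)|
          ≤ 1/n + (t+1)/n := habs
        _ = (t+2)/n := by field_simp; ring
        _ ≤ (y+3)/n := (div_le_div_iff_of_pos_right (by positivity)).mpr (by linarith)
        _ < ε := hnε
    · exact Filter.Eventually.of_forall (fun n => fun t htmem =>
        hasDerivAt_fN n t (lt_trans ha htmem.1))
    · intro t htmem
      have ht : 0 < t := lt_trans ha htmem.1
      have hΓ : 0 < Real.Gamma t := Real.Gamma_pos_of_pos ht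
      have h1 : Tendsto (fun n => Real.log (Real.GammaSeq t n)) atTop
          (𝓝 (Real.log (Real.Gamma t))) :=
        ((Real.continuousAt_log hΓ.ne').tendsto).comp (Real.GammaSeq_tendsto_Gamma t)
      apply h1.congr'
      filter_upwards [eventually_ge_atTop 1] with n hn
      exact log_GammaSeq t ht n hn
  have hd : DifferentiableAt ℝ Real.Gamma y :=
    Real.differentiableAt_Gamma (fun m => by
      have : (0:ℝ) ≤ m := Nat.cast_nonneg m
      intro hc; rw [hc] at hy; linarith)
  have key2 : HasDerivAt (fun t => Real.log (Real.Gamma t)) (psi y) y :=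
    hd.hasDerivAt.log (Real.Gamma_pos_of_pos hy).ne'
  have h := key2.unique key
  simp only [hg'def] at h
  exact h

/-! ### the function `h = psi - log` and its derivative -/

noncomputable def hfun (y : ℝ) : ℝ := psi y - Real.log y

noncomputable def qq (v : ℝ) : ℝ := 1/v^2 - (1/v - 1/(v+1))

noncomputable def eh (y : ℝ) : ℝ := ∑' k : ℕ, qq (y + k)

lemma hfun_eq (y : ℝ) (hy : 0 < y) : hfun y = -∑' k : ℕ, c (y + k) := by
  rw [hfun, psi_eq y hy]; ring

lemma abs_hfun_le (y : ℝ) (hy : 0 < y) : |hfun y| ≤ 1/y := by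
  rw [hfun_eq y hy, abs_neg, abs_le]
  have h1 := tsum_c_nonneg y hy
  have h2 := tsum_c_le y hy
  have : (0:ℝ) < 1/y := by positivity
  constructor <;> linarith

lemma qq_eq' {v : ℝ} (hv : 0 < v) : qq v = (1/v) * (1/v - 1/(v+1)) := by
  have hv1 : (0:ℝ) < v + 1 := by linarith
  rw [qq]
  field_simp
  ring

lemma qq_nonneg {v : ℝ} (hv : 0 < v) : 0 ≤ qq v := by
  rw [qq_eq' hv]
  have h1 : 1/(v+1) ≤ 1/v := one_div_le_one_div_of_le hv (by linarith)
  have : (0:ℝ) < 1/v := by positivity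
  nlinarith

lemma summable_qq (y : ℝ) (hy : 0 < y) : Summable (fun k : ℕ => qq (y + k)) := by
  refine Summable.of_nonneg_of_le (fun k => qq_nonneg (by positivity)) (fun k => ?_)
    (((hasSum_tele1 y hy).mul_left (1/y)).summable)
  have hyk : (0:ℝ) < y + k := by positivity
  rw [qq_eq' hyk]
  have h1 : 0 ≤ 1/(y + (k:ℝ)) - 1/(y + k + 1) := by
    have := one_div_le_one_div_of_le hyk (by linarith : y + (k:ℝ) ≤ y + k + 1)
    linarith
  have h2 : 1/(y + (k:ℝ)) ≤ 1/y := one_div_le_one_div_of_le hy (by linarith)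
  exact mul_le_mul_of_nonneg_right h2 h1

lemma eh_nonneg (y : ℝ) (hy : 0 < y) : 0 ≤ eh y :=
  tsum_nonneg (fun k => qq_nonneg (by positivity))

lemma eh_le (y : ℝ) (hy : 0 < y) : eh y ≤ 1/y^2 := by
  have h := (hasSum_tele1 y hy).mul_left (1/y)
  have h2 := Summable.tsum_le_tsum (f := fun k : ℕ => qq (y + k)) (fun k => ?_) (summable_qq y hy) h.summable
  · rw [h.tsum_eq] at h2
    calc eh y ≤ 1/y * (1/y) := h2
      _ = 1/y^2 := by rw [one_div_mul_one_div, ← pow_two]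
  · have hyk : (0:ℝ) < y + k := by positivity
    show qq (y + (k:ℝ)) ≤ _
    rw [qq_eq' hyk]
    have h1 : 0 ≤ 1/(y + (k:ℝ)) - 1/(y + k + 1) := by
      have := one_div_le_one_div_of_le hyk (by linarith : y + (k:ℝ) ≤ y + k + 1)
      linarith
    have h2 : 1/(y + (k:ℝ)) ≤ 1/y := one_div_le_one_div_of_le hy (by linarith)
    exact mul_le_mul_of_nonneg_right h2 h1

lemma hasDerivAt_c {u : ℝ} (hu : 0 < u) : HasDerivAt c (-qq u) u := by
  have h1 : HasDerivAt (fun v : ℝ => 1/v) (-(1/u^2)) u := by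
    simpa [one_div] using hasDerivAt_inv (ne_of_gt hu)
  have h2 : HasDerivAt (fun v : ℝ => Real.log (v+1)) (1/(u+1)) u := by
    simpa using ((hasDerivAt_id u).add_const (1:ℝ)).log (by positivity)
  have h3 : HasDerivAt Real.log u⁻¹ u := Real.hasDerivAt_log (ne_of_gt hu)
  have := h1.fun_sub (h2.fun_sub h3)
  refine this.congr_deriv ?_
  simp only [qq, one_div]
  ring

lemma hasDerivAt_c_shift {k : ℕ} {t : ℝ} (ht : 0 < t) :
    HasDerivAt (fun s : ℝ => c (s + k)) (-qq (t + k)) t := by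
  have h := (hasDerivAt_c (u := t + k) (by positivity)).comp t ((hasDerivAt_id t).add_const (k:ℝ))
  simpa [Function.comp_def] using h

lemma hasDerivAt_hfun (y : ℝ) (hy : 0 < y) : HasDerivAt hfun (eh y) y := by
  have ha : 0 < y/2 := by positivity
  have hyab : y ∈ Set.Ioo (y/2) (y+1) := ⟨by linarith, by linarith⟩
  refine hasDerivAt_of_tendstoUniformlyOn (l := (atTop : Filter ℕ)) (isOpen_Ioo)
    (f := fun (n : ℕ) (t : ℝ) => -∑ k ∈ range n, c (t + k))
    (f' := fun (n : ℕ) (t : ℝ) => ∑ k ∈ range n, qq (t + k))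
    ?_ ?_ ?_ hyab
  · rw [Metric.tendstoUniformlyOn_iff]
    intro ε hε
    have htend : Tendsto (fun n : ℕ => (1:ℝ) / n) atTop (𝓝 0) :=
      tendsto_one_div_atTop_nhds_zero_nat
    filter_upwards [eventually_ge_atTop 1, htend.eventually (gt_mem_nhds hε)] with n hn1 hnε
    intro t htmem
    have ht : 0 < t := lt_trans ha htmem.1
    have hnR : (1:ℝ) ≤ (n:ℝ) := by exact_mod_cast hn1
    have hsplit := Summable.sum_add_tsum_nat_add (f := fun k : ℕ => qq (t + k)) n (summable_qq t ht)
    have htail_eq : ∑' k : ℕ, qq (t + ↑(k + n)) = eh (t + n) := by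
      rw [eh]
      apply tsum_congr
      intro k
      congr 1
      push_cast
      ring
    have htn : (0:ℝ) < t + n := by positivity
    have htail_le : ∑' k : ℕ, qq (t + ↑(k + n)) ≤ 1/n := by
      rw [htail_eq]
      refine le_trans (eh_le _ htn) ?_
      apply one_div_le_one_div_of_le (by linarith)
      nlinarith
    have htail_nonneg : 0 ≤ ∑' k : ℕ, qq (t + ↑(k + n)) := by
      rw [htail_eq]; exact eh_nonneg _ htn
    rw [Real.dist_eq]
    have hkey : eh t - ∑ k ∈ range n, qq (t + k) = ∑' k : ℕ, qq (t + ↑(k + n)) := by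
      rw [eh, ← hsplit]; ring
    rw [hkey, abs_of_nonneg htail_nonneg]
    exact lt_of_le_of_lt htail_le hnε
  · apply Filter.Eventually.of_forall
    intro n t htmem
    have ht : 0 < t := lt_trans ha htmem.1
    have h := HasDerivAt.fun_sum (fun k (_ : k ∈ range n) => hasDerivAt_c_shift (k := k) ht)
    simpa using h.fun_neg
  · intro t htmem
    have ht : 0 < t := lt_trans ha htmem.1
    have h := ((summable_c t ht).hasSum.tendsto_sum_nat).neg
    rw [← hfun_eq t ht] at h
    exact h

/-! ### summability of inverse squares, `eh` as a difference -/

lemma summable_inv_sq (y : ℝ) (hy : 0 < y) : Summable (fun m : ℕ => 1 / (y + m) ^ 2) := by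
  have h := summable_inv_sq_shift y 1 hy one_pos
  have h2 : Summable (fun k : ℕ => 1 / (y + ↑(k + 1)) ^ 2) := by
    refine h.congr (fun k => ?_)
    push_cast
    ring_nf
  exact (summable_nat_add_iff 1).mp h2

lemma eh_eq (y : ℝ) (hy : 0 < y) : eh y = (∑' m : ℕ, 1 / (y + m) ^ 2) - 1/y := by
  rw [eh]
  have h1 := summable_inv_sq y hy
  have h2 := (hasSum_tele1 y hy).summable
  have : (fun k : ℕ => qq (y + k)) = fun k : ℕ => 1/(y+k)^2 - (1/(y+k) - 1/(y+k+1)) := by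
    funext k; simp only [qq]
  rw [this, Summable.tsum_sub h1 h2, (hasSum_tele1 y hy).tsum_eq]

/-! ### the function `G` (= HerglotzF) and its derivative `EE` -/

noncomputable def G (x : ℝ) : ℝ := ∑' n : ℕ, hfun (((n:ℝ)+1) * x) / ((n:ℝ)+1)

noncomputable def EE (x : ℝ) : ℝ := ∑' n : ℕ, eh (((n:ℝ)+1) * x)

lemma summable_base : Summable (fun n : ℕ => 1 / ((n:ℝ)+1) ^ 2) := by
  have h := summable_inv_sq 1 one_pos
  refine h.congr (fun n => ?_)
  rw [add_comm]

lemma summable_G_terms (x : ℝ) (hx : 0 < x) :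
    Summable (fun n : ℕ => hfun (((n:ℝ)+1) * x) / ((n:ℝ)+1)) := by
  rw [← summable_abs_iff]
  refine Summable.of_nonneg_of_le (fun n => abs_nonneg _) (fun n => ?_)
    (summable_base.mul_left (1/x))
  have hn1 : (0:ℝ) < (n:ℝ) + 1 := by positivity
  have hy : (0:ℝ) < ((n:ℝ)+1) * x := by positivity
  rw [abs_div, abs_of_pos hn1]
  have h := abs_hfun_le _ hy
  calc |hfun (((n:ℝ)+1) * x)| / ((n:ℝ)+1) ≤ (1/(((n:ℝ)+1) * x)) / ((n:ℝ)+1) := by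
        rw [div_eq_mul_inv, div_eq_mul_inv (1/(((n:ℝ)+1) * x))]
        exact mul_le_mul_of_nonneg_right h (by positivity)
    _ = 1/x * (1/((n:ℝ)+1)^2) := by field_simp

lemma summable_EE_terms (x : ℝ) (hx : 0 < x) :
    Summable (fun n : ℕ => eh (((n:ℝ)+1) * x)) := by
  refine Summable.of_nonneg_of_le (fun n => eh_nonneg _ (by positivity)) (fun n => ?_)
    (summable_base.mul_left (1/x^2))
  have hy : (0:ℝ) < ((n:ℝ)+1) * x := by positivity
  refine (eh_le _ hy).trans (le_of_eq ?_)
  rw [mul_pow]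
  field_simp

lemma HerglotzF_eq (x : ℝ) : HerglotzF x = G x := by
  rw [HerglotzF, G,
    ← Equiv.pnatEquivNat.symm.tsum_eq
      (f := fun n : ℕ+ => (psi ((n:ℝ) * x) - Real.log ((n:ℝ) * x)) / (n:ℝ))]
  apply tsum_congr
  intro n
  have he : ((Equiv.pnatEquivNat.symm n : ℕ+) : ℝ) = (n:ℝ) + 1 := by
    simp [Equiv.pnatEquivNat, Nat.succPNat]
  simp only [he, hfun]

set_option maxHeartbeats 1000000 in
lemma hasDerivAt_G (x : ℝ) (hx : 0 < x) : HasDerivAt G (EE x) x := by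
  have ha : 0 < x/2 := by positivity
  have hxab : x ∈ Set.Ioo (x/2) (x+1) := ⟨by linarith, by linarith⟩
  refine hasDerivAt_of_tendstoUniformlyOn (l := (atTop : Filter ℕ)) (isOpen_Ioo)
    (f := fun (N : ℕ) (t : ℝ) => ∑ n ∈ range N, hfun (((n:ℝ)+1) * t) / ((n:ℝ)+1))
    (f' := fun (N : ℕ) (t : ℝ) => ∑ n ∈ range N, eh (((n:ℝ)+1) * t))
    ?_ ?_ ?_ hxab
  · rw [Metric.tendstoUniformlyOn_iff]
    intro ε hε
    have hrem : Tendsto (fun N : ℕ => (1/(x/2)^2) * ∑' k : ℕ, 1 / ((↑(k + N):ℝ)+1) ^ 2)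
        atTop (𝓝 0) := by
      have h0 := tendsto_sum_nat_add (f := fun n : ℕ => 1 / ((n:ℝ)+1) ^ 2)
      have h := h0.const_mul (1/(x/2)^2)
      rw [mul_zero] at h
      exact h
    filter_upwards [hrem.eventually (gt_mem_nhds hε)] with N hN
    intro t htmem
    have ht : 0 < t := lt_trans ha htmem.1
    have hta : x/2 < t := htmem.1
    have hsplit := Summable.sum_add_tsum_nat_add (f := fun n : ℕ => eh (((n:ℝ)+1) * t)) N
      (summable_EE_terms t ht)
    have hkey : EE t - ∑ n ∈ range N, eh (((n:ℝ)+1) * t)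
        = ∑' k : ℕ, eh (((↑(k + N):ℝ)+1) * t) := by
      rw [EE, ← hsplit]; ring
    rw [Real.dist_eq, hkey]
    have hsum_shift : Summable (fun k : ℕ => eh (((↑(k + N):ℝ)+1) * t)) :=
      (summable_nat_add_iff N).mpr (summable_EE_terms t ht)
    have htail_nonneg : 0 ≤ ∑' k : ℕ, eh (((↑(k + N):ℝ)+1) * t) :=
      tsum_nonneg (fun k => eh_nonneg _ (by positivity))
    rw [abs_of_nonneg htail_nonneg]
    refine lt_of_le_of_lt ?_ hN
    have hbase_shift : Summable (fun k : ℕ => 1 / ((↑(k + N):ℝ)+1) ^ 2) :=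
      (summable_nat_add_iff N).mpr summable_base
    calc ∑' k : ℕ, eh (((↑(k + N):ℝ)+1) * t)
        ≤ ∑' k : ℕ, (1/(x/2)^2) * (1 / ((↑(k + N):ℝ)+1) ^ 2) := by
          apply Summable.tsum_le_tsum ?_ hsum_shift (hbase_shift.mul_left _)
          intro k
          have hm1 : (0:ℝ) < (↑(k + N):ℝ) + 1 := by positivity
          have hy : (0:ℝ) < ((↑(k + N):ℝ)+1) * t := by positivity
          refine (eh_le _ hy).trans ?_
          rw [mul_pow]
          have e1 : (1:ℝ)/(((↑(k + N):ℝ)+1)^2 * t^2)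
              = (1/t^2) * (1 / ((↑(k + N):ℝ)+1) ^ 2) := by
            field_simp
          rw [e1]
          apply mul_le_mul_of_nonneg_right ?_ (by positivity)
          apply one_div_le_one_div_of_le (by positivity)
          nlinarith
      _ = (1/(x/2)^2) * ∑' k : ℕ, 1 / ((↑(k + N):ℝ)+1) ^ 2 := by
          rw [tsum_mul_left]
  · apply Filter.Eventually.of_forall
    intro N t htmem
    have ht : 0 < t := lt_trans ha htmem.1
    apply HasDerivAt.fun_sum
    intro n _
    have hn1 : ((n:ℝ)+1) ≠ 0 := by positivity
    have hy : (0:ℝ) < ((n:ℝ)+1) * t := by positivity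
    have hlin : HasDerivAt (fun s : ℝ => ((n:ℝ)+1) * s) ((n:ℝ)+1) t := by
      simpa using (hasDerivAt_id t).const_mul ((n:ℝ)+1)
    have h := ((hasDerivAt_hfun _ hy).comp t hlin).div_const ((n:ℝ)+1)
    have e : eh (((n:ℝ)+1) * t) * ((n:ℝ)+1) / ((n:ℝ)+1) = eh (((n:ℝ)+1) * t) := by
      field_simp
    rw [e] at h
    exact h
  · intro t htmem
    have ht : 0 < t := lt_trans ha htmem.1
    exact (summable_G_terms t ht).hasSum.tendsto_sum_nat

lemma hasDerivAt_G_inv (x : ℝ) (hx : 0 < x) :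
    HasDerivAt (fun t : ℝ => G (1/t)) (-(EE (1/x)) / x^2) x := by
  have hinv : HasDerivAt (fun t : ℝ => 1/t) (-(1/x^2)) x := by
    simpa [one_div] using hasDerivAt_inv (ne_of_gt hx)
  have h := (hasDerivAt_G (1/x) (by positivity)).comp x hinv
  refine h.congr_deriv ?_
  ring

/-! ### the core Riemann-sum limit -/

lemma log_diff_lower {v a : ℝ} (hv : 0 < v) (ha : 0 < a) :
    a/(v+a) ≤ Real.log (v+a) - Real.log v := by
  have h := Real.log_le_sub_one_of_pos (x := v/(v+a)) (by positivity)
  rw [Real.log_div (ne_of_gt hv) (by positivity)] at h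
  have e : v/(v+a) - 1 = -(a/(v+a)) := by field_simp; ring
  linarith

lemma log_diff_upper {v a : ℝ} (hv : 0 < v) (ha : 0 < a) :
    Real.log (v+a) - Real.log v ≤ a/v := by
  have h := Real.log_le_sub_one_of_pos (x := (v+a)/v) (by positivity)
  rw [Real.log_div (by positivity) (ne_of_gt hv)] at h
  have e : (v+a)/v - 1 = a/v := by field_simp; ring
  linarith

lemma CL (α β δ : ℝ) (hα : 0 < α) (hβ : 0 < β) (hδ : 0 ≤ δ) :
    Tendsto (fun N : ℕ => ∑ n ∈ range N, 1/(α*((n:ℝ)+1) + β*N + δ)) atTop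
      (𝓝 ((1/α) * Real.log ((α+β)/β))) := by
  set S : ℕ → ℝ := fun N => ∑ n ∈ range N, 1/(α*((n:ℝ)+1) + β*N + δ) with hS
  set T : ℕ → ℝ := fun N => (1/α)*(Real.log (α*N+β*N+δ) - Real.log (β*N+δ)) with hT
  have hTel : ∀ N : ℕ, T N = ∑ n ∈ range N,
      (1/α)*(Real.log (α*((n:ℝ)+1)+β*N+δ) - Real.log (α*n+β*N+δ)) := by
    intro N
    have h := Finset.sum_range_sub (f := fun i : ℕ => (1/α)*Real.log (α*i+β*N+δ)) N
    simp only [Nat.cast_zero, mul_zero, zero_add] at h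
    rw [hT]
    simp only []
    rw [mul_sub, ← h]
    apply Finset.sum_congr rfl
    intro n _
    rw [← mul_sub]
    congr 2
    push_cast
    ring
  -- difference bound
  have hdiff : ∀ N : ℕ, 1 ≤ N → 0 ≤ T N - S N ∧ T N - S N ≤ α/(β^2*N) := by
    intro N hN
    have hNR : (1:ℝ) ≤ (N:ℝ) := by exact_mod_cast hN
    have hterm : ∀ n ∈ range N,
        (0 ≤ (1/α)*(Real.log (α*((n:ℝ)+1)+β*N+δ) - Real.log (α*n+β*N+δ))
            - 1/(α*((n:ℝ)+1) + β*N + δ)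
        ∧ (1/α)*(Real.log (α*((n:ℝ)+1)+β*N+δ) - Real.log (α*n+β*N+δ))
            - 1/(α*((n:ℝ)+1) + β*N + δ) ≤ α/(β*N)^2) := by
      intro n hn
      have hv : (0:ℝ) < α*n+β*N+δ := by
        have : (0:ℝ) ≤ α*n := by positivity
        nlinarith
      have hva : α*((n:ℝ)+1)+β*N+δ = (α*n+β*N+δ) + α := by ring
      have hlow := log_diff_lower hv hα
      have hup := log_diff_upper hv hα
      set v := α*n+β*N+δ with hvdef
      rw [hva]
      constructor
      · have h1 : α/(v+α) ≤ Real.log (v+α) - Real.log v := hlow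
        have h2 : 1/(v+α) = (1/α) * (α/(v+α)) := by field_simp
        have h3 : (1/α) * (α/(v+α)) ≤ (1/α)*(Real.log (v+α) - Real.log v) := by
          apply mul_le_mul_of_nonneg_left h1 (by positivity)
        linarith
      · have h1 : (1/α)*(Real.log (v+α) - Real.log v) ≤ (1/α)*(α/v) := by
          apply mul_le_mul_of_nonneg_left hup (by positivity)
        have h2 : (1/α)*(α/v) = 1/v := by field_simp
        have h3 : 1/v - 1/(v+α) = α/(v*(v+α)) := by
          rw [inv_sub_inv_step (by positivity) hα]
        have h4 : α/(v*(v+α)) ≤ α/(β*N)^2 := by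
          apply div_le_div_of_nonneg_left (le_of_lt hα) (by positivity) ?_
          have hv1 : β*N ≤ v := by
            have : (0:ℝ) ≤ α*n := by positivity
            nlinarith
          have hv2 : β*N ≤ v + α := by linarith
          have hβN : (0:ℝ) < β*N := by positivity
          calc (β*N)^2 = (β*N)*(β*N) := sq (β*N) ▸ rfl
            _ ≤ v*(v+α) := by nlinarith
        linarith
    constructor
    · rw [hTel N, hS, ← Finset.sum_sub_distrib]
      apply Finset.sum_nonneg
      intro n hn
      exact (hterm n hn).1
    · rw [hTel N, hS, ← Finset.sum_sub_distrib]
      calc ∑ n ∈ range N, ((1/α)*(Real.log (α*((n:ℝ)+1)+β*N+δ) - Real.log (α*n+β*N+δ))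
            - 1/(α*((n:ℝ)+1) + β*N + δ))
          ≤ ∑ _n ∈ range N, α/(β*N)^2 := by
            apply Finset.sum_le_sum
            intro n hn
            exact (hterm n hn).2
        _ = N * (α/(β*N)^2) := by rw [Finset.sum_const, card_range, nsmul_eq_mul]
        _ = α/(β^2*N) := by
            have hNR : (0:ℝ) < (N:ℝ) := by exact_mod_cast hN
            field_simp
  -- limit of T
  have hTlim : Tendsto T atTop (𝓝 ((1/α) * Real.log ((α+β)/β))) := by
    have hratio : Tendsto (fun N : ℕ => ((α+β) + δ/N)/(β + δ/N)) atTop (𝓝 ((α+β)/β)) := by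
      have h1 : Tendsto (fun N : ℕ => (α+β) + δ/N) atTop (𝓝 (α+β)) := by
        have := tendsto_const_div_atTop_nhds_zero_nat δ
        simpa using tendsto_const_nhds.add this
      have h2 : Tendsto (fun N : ℕ => β + δ/N) atTop (𝓝 β) := by
        have := tendsto_const_div_atTop_nhds_zero_nat δ
        simpa using tendsto_const_nhds.add this
      exact h1.div h2 (ne_of_gt hβ)
    have hlog : Tendsto (fun N : ℕ => Real.log (((α+β) + δ/N)/(β + δ/N))) atTop
        (𝓝 (Real.log ((α+β)/β))) :=
      ((Real.continuousAt_log (by positivity)).tendsto).comp hratio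
    have := hlog.const_mul (1/α)
    apply this.congr'
    filter_upwards [eventually_ge_atTop 1] with N hN
    have hNR : (0:ℝ) < (N:ℝ) := by exact_mod_cast hN
    have hβN : (0:ℝ) < β*N+δ := by positivity
    have hαβN : (0:ℝ) < α*N+β*N+δ := by positivity
    rw [hT]
    simp only []
    rw [← Real.log_div (ne_of_gt hαβN) (ne_of_gt hβN)]
    congr 2
    field_simp
  -- conclude
  have hdiff0 : Tendsto (fun N => T N - S N) atTop (𝓝 0) := by
    apply squeeze_zero' (f := fun N => T N - S N) (g := fun N : ℕ => α/(β^2*N))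
    · filter_upwards [eventually_ge_atTop 1] with N hN
      exact (hdiff N hN).1
    · filter_upwards [eventually_ge_atTop 1] with N hN
      exact (hdiff N hN).2
    · have h := tendsto_const_div_atTop_nhds_zero_nat (α/β^2)
      apply h.congr
      intro N
      rw [div_div]
  have : Tendsto (fun N => T N - (T N - S N)) atTop (𝓝 ((1/α) * Real.log ((α+β)/β) - 0)) :=
    hTlim.sub hdiff0
  simpa using this

/-! ### Basel sums -/

lemma hasSum_basel_shift : HasSum (fun n : ℕ => 1 / ((n:ℝ)+1)^2) (π^2/6) := by
  have e : (fun n : ℕ => 1 / ((n:ℝ)+1)^2) = fun n : ℕ => (1:ℝ)/((↑(n+1):ℝ))^2 := by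
    funext n; push_cast; ring_nf
  rw [e, hasSum_nat_add_iff (f := fun n : ℕ => (1:ℝ)/(n:ℝ)^2) 1]
  simpa using hasSum_zeta_two

lemma basel_partial (x : ℝ) (hx : 0 < x) :
    Tendsto (fun N : ℕ => ∑ n ∈ range N, 1/(((n:ℝ)+1)*x)^2) atTop (𝓝 (π^2/6 * (1/x^2))) := by
  have e : (fun n : ℕ => 1/(((n:ℝ)+1)*x)^2) = fun n : ℕ => 1/x^2 * (1/((n:ℝ)+1)^2) := by
    funext n
    have hn : ((n:ℝ)+1) ≠ 0 := by positivity
    rw [mul_pow]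
    field_simp
  have h1 : HasSum (fun n : ℕ => 1/(((n:ℝ)+1)*x)^2) (1/x^2 * (π^2/6)) := by
    rw [e]; exact hasSum_basel_shift.mul_left _
  have h2 := h1.tendsto_sum_nat
  rw [show (1:ℝ)/x^2 * (π^2/6) = π^2/6 * (1/x^2) from by ring] at h2
  exact h2

/-! ### per-term identity -/

lemma summable_B (x : ℝ) (hx : 0 < x) (ν : ℝ) (hν : 0 < ν) :
    Summable (fun m : ℕ => 1/(ν + (m:ℝ)*x)^2) := by
  have h := (summable_inv_sq (ν/x) (by positivity)).mul_left (1/x^2)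
  refine h.congr (fun m => ?_)
  have h1 : ν + (m:ℝ)*x ≠ 0 := by positivity
  field_simp [hx.ne']

lemma per_term (x : ℝ) (hx : 0 < x) (ν : ℝ) (hν : 0 < ν) :
    eh (ν * x) - (1/x^2) * eh (ν * (1/x))
      = ∑' m : ℕ, (1/(ν*x + m)^2 - 1/(ν + (m:ℝ)*x)^2) := by
  have hx' : (0:ℝ) < 1/x := by positivity
  have hA : Summable (fun m : ℕ => 1/(ν*x + m)^2) := summable_inv_sq _ (by positivity)
  have hB : Summable (fun m : ℕ => 1/(ν + (m:ℝ)*x)^2) := summable_B x hx ν hν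
  rw [eh_eq _ (by positivity), eh_eq _ (by positivity)]
  have hBsum : (1/x^2) * ∑' m : ℕ, 1/(ν*(1/x) + m)^2 = ∑' m : ℕ, 1/(ν + (m:ℝ)*x)^2 := by
    rw [← tsum_mul_left]
    apply tsum_congr
    intro m
    have h1 : ν + (m:ℝ)*x ≠ 0 := by positivity
    field_simp [hx.ne']
  have hc : (1/x^2) * (1/(ν*(1/x))) = 1/(ν*x) := by
    field_simp
  rw [mul_sub, hBsum, hc, Summable.tsum_sub hA hB]
  ring

lemma KI_claim (x : ℝ) (hx : 0 < x) (N : ℕ) :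
    ∑ n ∈ range N, (eh (((n:ℝ)+1) * x) - (1/x^2) * eh (((n:ℝ)+1) * (1/x)))
      = ((∑ n ∈ range N, 1/(((n:ℝ)+1)*x)^2)
          + ∑ n ∈ range N, ∑' m : ℕ, 1/((((n:ℝ)+1)*x) + ((↑(m+N):ℝ)+1))^2)
        - ((∑ n ∈ range N, 1/((n:ℝ)+1)^2)
          + ∑ n ∈ range N, ∑' m : ℕ, 1/(((↑(m+N):ℝ)+1)*x + ((n:ℝ)+1))^2) := by
  have hAfull : ∀ n : ℕ, Summable (fun m : ℕ => 1/(((n:ℝ)+1)*x + m)^2) :=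
    fun n => summable_inv_sq _ (by positivity)
  have hBfull : ∀ n : ℕ, Summable (fun m : ℕ => 1/(((n:ℝ)+1) + (m:ℝ)*x)^2) :=
    fun n => summable_B x hx _ (by positivity)
  have hAsh : ∀ n : ℕ, Summable (fun m : ℕ => 1/((((n:ℝ)+1)*x) + ((m:ℝ)+1))^2) := by
    intro n
    have h := summable_inv_sq_shift (((n:ℝ)+1)*x) 1 (by positivity) one_pos
    refine h.congr (fun m => ?_)
    ring_nf
  have hBsh : ∀ n : ℕ, Summable (fun m : ℕ => 1/((((m:ℝ)+1))*x + ((n:ℝ)+1))^2) := by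
    intro n
    have h := summable_inv_sq_shift ((n:ℝ)+1) x (by positivity) hx
    refine h.congr (fun m => ?_)
    ring_nf
  have step1 : ∀ n : ℕ, eh (((n:ℝ)+1) * x) - (1/x^2) * eh (((n:ℝ)+1) * (1/x))
      = (1/(((n:ℝ)+1)*x)^2 + ((∑ m ∈ range N, 1/((((n:ℝ)+1)*x) + ((m:ℝ)+1))^2)
          + ∑' m : ℕ, 1/((((n:ℝ)+1)*x) + ((↑(m+N):ℝ)+1))^2))
        - (1/((n:ℝ)+1)^2 + ((∑ m ∈ range N, 1/((((m:ℝ)+1))*x + ((n:ℝ)+1))^2)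
          + ∑' m : ℕ, 1/(((↑(m+N):ℝ)+1)*x + ((n:ℝ)+1))^2)) := by
    intro n
    rw [per_term x hx _ (by positivity), Summable.tsum_sub (hAfull n) (hBfull n)]
    congr 1
    · calc ∑' m : ℕ, 1/(((n:ℝ)+1)*x + m)^2
          = 1/(((n:ℝ)+1)*x)^2 + ∑' m : ℕ, 1/((((n:ℝ)+1)*x) + ((m:ℝ)+1))^2 := by
            rw [Summable.tsum_eq_zero_add (hAfull n)]
            congr 1
            · norm_num
            · exact tsum_congr fun m => by push_cast; ring_nf
        _ = 1/(((n:ℝ)+1)*x)^2 + ((∑ m ∈ range N, 1/((((n:ℝ)+1)*x) + ((m:ℝ)+1))^2)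
              + ∑' m : ℕ, 1/((((n:ℝ)+1)*x) + ((↑(m+N):ℝ)+1))^2) := by
            rw [← Summable.sum_add_tsum_nat_add N (hAsh n)]
    · calc ∑' m : ℕ, 1/(((n:ℝ)+1) + (m:ℝ)*x)^2
          = 1/((n:ℝ)+1)^2 + ∑' m : ℕ, 1/((((m:ℝ)+1))*x + ((n:ℝ)+1))^2 := by
            rw [Summable.tsum_eq_zero_add (hBfull n)]
            congr 1
            · norm_num
            · exact tsum_congr fun m => by push_cast; ring_nf
        _ = 1/((n:ℝ)+1)^2 + ((∑ m ∈ range N, 1/((((m:ℝ)+1))*x + ((n:ℝ)+1))^2)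
              + ∑' m : ℕ, 1/(((↑(m+N):ℝ)+1)*x + ((n:ℝ)+1))^2) := by
            rw [← Summable.sum_add_tsum_nat_add N (hBsh n)]
  rw [Finset.sum_congr rfl (fun n _ => step1 n)]
  rw [Finset.sum_sub_distrib, Finset.sum_add_distrib, Finset.sum_add_distrib,
    Finset.sum_add_distrib, Finset.sum_add_distrib]
  have hcomm : ∑ n ∈ range N, ∑ m ∈ range N, 1/((((m:ℝ)+1))*x + ((n:ℝ)+1))^2
      = ∑ n ∈ range N, ∑ m ∈ range N, 1/((((n:ℝ)+1))*x + ((m:ℝ)+1))^2 :=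
    Finset.sum_comm
  rw [hcomm]
  ring

lemma hX (x : ℝ) (hx : 0 < x) :
    Tendsto (fun N : ℕ => ∑ n ∈ range N,
        ∑' m : ℕ, 1/((((n:ℝ)+1)*x) + ((↑(m+N):ℝ)+1))^2) atTop
      (𝓝 ((1/x) * Real.log ((x+1)/1))) := by
  have hlo := CL x 1 1 hx one_pos zero_le_one
  have hhi := CL x 1 0 hx one_pos le_rfl
  rw [show x + 1 = x + 1 from rfl] at hlo
  apply tendsto_of_tendsto_of_tendsto_of_le_of_le (g := fun N : ℕ =>
      ∑ n ∈ range N, 1/(x*((n:ℝ)+1) + 1*(N:ℝ) + 1))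
    (h := fun N : ℕ => ∑ n ∈ range N, 1/(x*((n:ℝ)+1) + 1*(N:ℝ) + 0)) hlo hhi
  · intro N
    apply Finset.sum_le_sum
    intro n _
    have hw : (0:ℝ) < ((n:ℝ)+1)*x + N := by positivity
    have hcong : (∑' m : ℕ, 1/((((n:ℝ)+1)*x) + ((↑(m+N):ℝ)+1))^2)
        = ∑' m : ℕ, 1/(((((n:ℝ)+1)*x + (N:ℝ))) + ((m:ℝ)+1)*1)^2 := by
      apply tsum_congr
      intro m
      congr 2
      push_cast
      ring
    have e : x*((n:ℝ)+1) + 1*(N:ℝ) + 1 = 1*((((n:ℝ)+1)*x + (N:ℝ)) + 1) := by ring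
    rw [e, hcong]
    exact le_tsum_inv_sq _ 1 hw one_pos
  · intro N
    apply Finset.sum_le_sum
    intro n _
    have hw : (0:ℝ) < ((n:ℝ)+1)*x + N := by positivity
    have hcong : (∑' m : ℕ, 1/((((n:ℝ)+1)*x) + ((↑(m+N):ℝ)+1))^2)
        = ∑' m : ℕ, 1/(((((n:ℝ)+1)*x + (N:ℝ))) + ((m:ℝ)+1)*1)^2 := by
      apply tsum_congr
      intro m
      congr 2
      push_cast
      ring
    have e : x*((n:ℝ)+1) + 1*(N:ℝ) + 0 = 1*(((n:ℝ)+1)*x + (N:ℝ)) := by ring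
    rw [e, hcong]
    exact tsum_inv_sq_le _ 1 hw one_pos

lemma hY (x : ℝ) (hx : 0 < x) :
    Tendsto (fun N : ℕ => ∑ n ∈ range N,
        ∑' m : ℕ, 1/(((↑(m+N):ℝ)+1)*x + ((n:ℝ)+1))^2) atTop
      (𝓝 ((1/x) * ((1/1) * Real.log ((1+x)/x)))) := by
  have hlo := (CL 1 x x one_pos hx (le_of_lt hx)).const_mul (1/x)
  have hhi := (CL 1 x 0 one_pos hx le_rfl).const_mul (1/x)
  apply tendsto_of_tendsto_of_tendsto_of_le_of_le (g := fun N : ℕ =>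
      (1/x) * ∑ n ∈ range N, 1/(1*((n:ℝ)+1) + x*(N:ℝ) + x))
    (h := fun N : ℕ => (1/x) * ∑ n ∈ range N, 1/(1*((n:ℝ)+1) + x*(N:ℝ) + 0)) hlo hhi
  · intro N
    simp only []
    rw [Finset.mul_sum]
    apply Finset.sum_le_sum
    intro n _
    have hw : (0:ℝ) < (N:ℝ)*x + ((n:ℝ)+1) := by positivity
    have hcong : (∑' m : ℕ, 1/(((↑(m+N):ℝ)+1)*x + ((n:ℝ)+1))^2)
        = ∑' m : ℕ, 1/((((N:ℝ)*x + ((n:ℝ)+1))) + ((m:ℝ)+1)*x)^2 := by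
      apply tsum_congr
      intro m
      congr 2
      push_cast
      ring
    have e : (1/x) * (1/(1*((n:ℝ)+1) + x*(N:ℝ) + x))
        = 1/(x*(((N:ℝ)*x + ((n:ℝ)+1)) + x)) := by
      rw [one_div_mul_one_div]
      congr 1
      ring
    rw [e, hcong]
    exact le_tsum_inv_sq _ x hw hx
  · intro N
    simp only []
    rw [Finset.mul_sum]
    apply Finset.sum_le_sum
    intro n _
    have hw : (0:ℝ) < (N:ℝ)*x + ((n:ℝ)+1) := by positivity
    have hcong : (∑' m : ℕ, 1/(((↑(m+N):ℝ)+1)*x + ((n:ℝ)+1))^2)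
        = ∑' m : ℕ, 1/((((N:ℝ)*x + ((n:ℝ)+1))) + ((m:ℝ)+1)*x)^2 := by
      apply tsum_congr
      intro m
      congr 2
      push_cast
      ring
    have e : (1/x) * (1/(1*((n:ℝ)+1) + x*(N:ℝ) + 0))
        = 1/(x*((N:ℝ)*x + ((n:ℝ)+1))) := by
      rw [one_div_mul_one_div]
      congr 1
      ring
    rw [e, hcong]
    exact tsum_inv_sq_le _ x hw hx

lemma KI (x : ℝ) (hx : 0 < x) :
    EE x - (1/x^2) * EE (1/x) = Real.log x / x - π^2/6 * (1 - 1/x^2) := by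
  have hx' : (0:ℝ) < 1/x := by positivity
  have hsum1 := summable_EE_terms x hx
  have hsum2 := (summable_EE_terms (1/x) hx').mul_left (1/x^2)
  have hw : Summable (fun n : ℕ => eh (((n:ℝ)+1) * x) - (1/x^2) * eh (((n:ℝ)+1) * (1/x))) :=
    hsum1.sub hsum2
  have htsum : ∑' n : ℕ, (eh (((n:ℝ)+1) * x) - (1/x^2) * eh (((n:ℝ)+1) * (1/x)))
      = EE x - (1/x^2) * EE (1/x) := by
    rw [Summable.tsum_sub hsum1 hsum2, tsum_mul_left]
    rfl
  have hS := hw.hasSum.tendsto_sum_nat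
  rw [htsum] at hS
  have hXlim := hX x hx
  have hYlim := hY x hx
  have hpA := basel_partial x hx
  have hpB : Tendsto (fun N : ℕ => ∑ n ∈ range N, 1/((n:ℝ)+1)^2) atTop (𝓝 (π^2/6)) :=
    hasSum_basel_shift.tendsto_sum_nat
  have hDecomp := (hpA.add hXlim).sub (hpB.add hYlim)
  have hDecomp' := hDecomp.congr (fun N => (KI_claim x hx N).symm)
  have hval := tendsto_nhds_unique hS hDecomp'
  rw [hval]
  rw [div_one, one_div_one, one_mul]
  rw [Real.log_div (by positivity : (1:ℝ)+x ≠ 0) (ne_of_gt hx)]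
  rw [show x + 1 = 1 + x from add_comm x 1]
  field_simp
  ring

/-! ### final assembly -/

lemma G_funct (x : ℝ) (hx : 0 < x) :
    G x + G (1/x) = 2*(G 1) + (1/2)*(Real.log x)^2 - π^2/6 * (x - 2 + 1/x) := by
  set Φ : ℝ → ℝ := fun t =>
    (G t + G (1/t)) - (2*(G 1) + (1/2)*(Real.log t)^2 - π^2/6 * (t - 2 + 1/t)) with hΦ
  have hderiv : ∀ t : ℝ, 0 < t → HasDerivAt Φ 0 t := by
    intro t ht
    have h1 : HasDerivAt (fun t => G t + G (1/t)) (EE t - EE (1/t)/t^2) t := by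
      have h := (hasDerivAt_G t ht).add (hasDerivAt_G_inv t ht)
      refine h.congr_deriv ?_
      ring
    have hl : HasDerivAt (fun t : ℝ => (Real.log t)^2) (2 * (Real.log t) * t⁻¹) t := by
      have h := (Real.hasDerivAt_log (ne_of_gt ht)).pow 2; simp at h; exact h
    have hinv : HasDerivAt (fun t : ℝ => 1/t) (-(1/t^2)) t := by
      simpa [one_div] using hasDerivAt_inv (ne_of_gt ht)
    have hlin : HasDerivAt (fun s : ℝ => s - 2 + 1/s) (1 + -(1/t^2)) t := by
      simpa using ((hasDerivAt_id t).sub_const 2).fun_add hinv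
    have h2 : HasDerivAt (fun t : ℝ => 2*(G 1) + (1/2)*(Real.log t)^2 - π^2/6 * (t - 2 + 1/t))
        (Real.log t / t - π^2/6 * (1 - 1/t^2)) t := by
      have h := ((hl.const_mul ((1:ℝ)/2)).const_add (2*(G 1))).sub (hlin.const_mul (π^2/6))
      refine h.congr_deriv ?_
      rw [div_eq_mul_inv]
      ring
    have key : EE t - EE (1/t)/t^2 = Real.log t / t - π^2/6 * (1 - 1/t^2) := by
      have h := KI t ht
      rw [← h]
      ring
    rw [key] at h1
    have h := h1.sub h2
    rw [sub_self] at h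
    exact h
  have hΦ1 : Φ 1 = 0 := by
    simp only [hΦ]
    norm_num
    ring
  rcases le_or_gt 1 x with hx1 | hx1
  · have hres := constant_of_has_deriv_right_zero (f := Φ) (a := 1) (b := x)
      (fun t ht => ((hderiv t (by linarith [ht.1] : (0:ℝ) < t)).continuousAt).continuousWithinAt)
      (fun t ht => (hderiv t (by linarith [ht.1] : (0:ℝ) < t)).hasDerivWithinAt)
      x ⟨hx1, le_rfl⟩
    rw [hΦ1] at hres
    have : Φ x = 0 := hres
    simp only [hΦ] at this
    linarith
  · have hres := constant_of_has_deriv_right_zero (f := Φ) (a := x) (b := 1)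
      (fun t ht => ((hderiv t (lt_of_lt_of_le hx ht.1)).continuousAt).continuousWithinAt)
      (fun t ht => (hderiv t (lt_of_lt_of_le hx ht.1)).hasDerivWithinAt)
      1 ⟨le_of_lt hx1, le_rfl⟩
    rw [hΦ1] at hres
    have : Φ x = 0 := hres.symm
    simp only [hΦ] at this
    linarith

end ZagierAux

theorem stmt19 (x : ℝ) (hx : 0 < x) :
    HerglotzF x + HerglotzF (1 / x) =
      2 * HerglotzF 1 + (1 / 2) * (Real.log x) ^ 2 - (Real.pi ^ 2 / (6 * x)) * (x - 1) ^ 2 := by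
  rw [ZagierAux.HerglotzF_eq, ZagierAux.HerglotzF_eq, ZagierAux.HerglotzF_eq, ZagierAux.G_funct x hx]
  have h : Real.pi^2/6 * (x - 2 + 1/x) = (Real.pi^2/(6*x)) * (x-1)^2 := by
    field_simp
    ring
  rw [← h]
end
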